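/- arXiv:1909.07350 — 5 statements merged into one kernel-verified Lean document; each statement's English description precedes it below -/
import Mathlib

section
/- For every non-negative integer n, (-432)^n * Σ_{k=0}^n ((1/6)_k (5/6)_{n-k} / ((1)_k (1)_{n-k}))^2 = Σ_{k=0}^n C(6k,3k) * C(3k,2k) * C(2k,k) * C(n+k, n-k) * (-432)^{n-k}, where (a)_m denotes the Pochhammer symbol (rising factorial) and C denotes the binomial coefficient. -/
open Finset

noncomputable def Aq (k : ℕ) : ℚ :=
  ((ascPochhammer ℚ k).eval (1/6) / (ascPochhammer ℚ k).eval 1)^2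

noncomputable def Bq (k : ℕ) : ℚ :=
  ((ascPochhammer ℚ k).eval (5/6) / (ascPochhammer ℚ k).eval 1)^2

lemma Aq_zero : Aq 0 = 1 := by simp [Aq]

lemma Bq_zero : Bq 0 = 1 := by simp [Bq]

lemma Aq_succ (k : ℕ) : Aq (k+1) = Aq k * (((k:ℚ) + 1/6)/((k:ℚ)+1))^2 := by
  simp only [Aq, ascPochhammer_succ_right, Polynomial.eval_mul, Polynomial.eval_add,
    Polynomial.eval_X, Polynomial.eval_natCast]
  rw [mul_div_mul_comm, mul_pow]
  ring_nf

lemma Bq_succ (k : ℕ) : Bq (k+1) = Bq k * (((k:ℚ) + 5/6)/((k:ℚ)+1))^2 := by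
  simp only [Bq, ascPochhammer_succ_right, Polynomial.eval_mul, Polynomial.eval_add,
    Polynomial.eval_X, Polynomial.eval_natCast]
  rw [mul_div_mul_comm, mul_pow]
  ring_nf

lemma chooseQ (a b : ℕ) : ((a.choose (b+1)):ℚ) * (b+1) = a.choose b * ((a:ℚ) - b) := by
  rcases le_or_gt b a with h | h
  · have := Nat.choose_succ_right_eq a b
    have h2 : ((a.choose (b+1) * (b+1) : ℕ) : ℚ) = ((a.choose b * (a - b) : ℕ) : ℚ) := by
      exact_mod_cast congrArg (Nat.cast : ℕ → ℚ) this
    push_cast [Nat.cast_sub h] at h2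
    linarith [h2]
  · rw [Nat.choose_eq_zero_of_lt h, Nat.choose_eq_zero_of_lt (by omega)]
    simp

lemma chooseQ1 (a b : ℕ) : (((a+1).choose b : ℕ) : ℚ) * ((a:ℚ) + 1 - b) = (a.choose b) * ((a:ℚ)+1) := by
  rcases b with _ | c
  · simp
  · have h1 := chooseQ a c
    have h2 : ((a:ℚ)+1) * (a.choose c) = ((a+1).choose (c+1)) * ((c:ℚ)+1) := by
      have := Nat.add_one_mul_choose_eq a c
      exact_mod_cast congrArg (Nat.cast : ℕ → ℚ) this
    have hc : ((c:ℚ)+1) ≠ 0 := by positivity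
    apply mul_right_cancel₀ hc
    push_cast at h1 h2 ⊢
    ring_nf
    ring_nf at h1 h2
    nlinarith [h1, h2]

def cq (k : ℕ) : ℚ :=
  (Nat.choose (6*k) (3*k) : ℚ) * (Nat.choose (3*k) (2*k)) * (Nat.choose (2*k) k)

lemma cq_fact (k : ℕ) :
    cq k * (((3*k).factorial : ℚ) * ((k.factorial : ℚ))^3) = ((6*k).factorial : ℚ) := by
  have E1 : ((Nat.choose (6*k) (3*k) : ℚ)) * ((3*k).factorial : ℚ) * ((3*k).factorial : ℚ)
      = ((6*k).factorial : ℚ) := by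
    have h := Nat.choose_mul_factorial_mul_factorial (show 3*k ≤ 6*k by omega)
    have h2 : 6*k - 3*k = 3*k := by omega
    rw [h2] at h
    exact_mod_cast congrArg (Nat.cast : ℕ → ℚ) h
  have E2 : ((Nat.choose (3*k) (2*k) : ℚ)) * ((2*k).factorial : ℚ) * ((k.factorial : ℚ))
      = ((3*k).factorial : ℚ) := by
    have h := Nat.choose_mul_factorial_mul_factorial (show 2*k ≤ 3*k by omega)
    have h2 : 3*k - 2*k = k := by omega
    rw [h2] at h
    exact_mod_cast congrArg (Nat.cast : ℕ → ℚ) h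
  have E3 : ((Nat.choose (2*k) k : ℚ)) * ((k.factorial : ℚ)) * ((k.factorial : ℚ))
      = ((2*k).factorial : ℚ) := by
    have h := Nat.choose_mul_factorial_mul_factorial (show k ≤ 2*k by omega)
    have h2 : 2*k - k = k := by omega
    rw [h2] at h
    exact_mod_cast congrArg (Nat.cast : ℕ → ℚ) h
  unfold cq
  linear_combination E1 + (((Nat.choose (6*k) (3*k) : ℚ)) * ((3*k).factorial : ℚ)) * E2
    + (((Nat.choose (6*k) (3*k) : ℚ)) * ((3*k).factorial : ℚ) * ((Nat.choose (3*k) (2*k) : ℚ)) * ((k.factorial : ℚ))) * E3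

lemma factQ (m : ℕ) : ((m+1).factorial : ℚ) = ((m:ℚ)+1) * (m.factorial : ℚ) := by
  push_cast [Nat.factorial_succ]
  ring

lemma cq_ratio (k : ℕ) :
    cq (k+1) * (((k:ℚ)+1)^3 * ((3*(k:ℚ)+1)*(3*(k:ℚ)+2)*(3*(k:ℚ)+3)))
      = cq k * ((6*(k:ℚ)+1)*(6*(k:ℚ)+2)*(6*(k:ℚ)+3)*(6*(k:ℚ)+4)*(6*(k:ℚ)+5)*(6*(k:ℚ)+6)) := by
  have h1 := cq_fact k
  have h2 := cq_fact (k+1)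
  have e6 : ((6*(k+1)).factorial : ℚ)
      = (6*(k:ℚ)+1)*(6*(k:ℚ)+2)*(6*(k:ℚ)+3)*(6*(k:ℚ)+4)*(6*(k:ℚ)+5)*(6*(k:ℚ)+6)
        * ((6*k).factorial : ℚ) := by
    have : 6*(k+1) = (6*k+4)+1+1 := by omega
    rw [this, factQ, factQ]
    have : 6*k+4 = (6*k+2)+1+1 := by omega
    rw [this, factQ, factQ]
    have : 6*k+2 = (6*k)+1+1 := by omega
    rw [this, factQ, factQ]
    push_cast
    ring
  have e3 : ((3*(k+1)).factorial : ℚ)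
      = (3*(k:ℚ)+1)*(3*(k:ℚ)+2)*(3*(k:ℚ)+3) * ((3*k).factorial : ℚ) := by
    have : 3*(k+1) = (3*k+1)+1+1 := by omega
    rw [this, factQ, factQ]
    have : 3*k+1 = (3*k)+1 := by omega
    rw [this, factQ]
    push_cast
    ring
  have e1 : (((k+1)).factorial : ℚ) = ((k:ℚ)+1) * (k.factorial : ℚ) := factQ k
  rw [e6] at h2
  rw [e3, e1] at h2
  have hne : (((3*k).factorial : ℚ) * ((k.factorial:ℚ))^3) ≠ 0 := by positivity
  apply mul_right_cancel₀ hne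
  linear_combination h2 - ((6*(k:ℚ)+1)*(6*(k:ℚ)+2)*(6*(k:ℚ)+3)*(6*(k:ℚ)+4)*(6*(k:ℚ)+5)*(6*(k:ℚ)+6)) * h1

def Tb (n k : ℕ) : ℚ :=
  cq k * (Nat.choose (n+k) (2*k) : ℚ) * (-432)^n * ((-432:ℚ)⁻¹)^k

def Gb (n : ℕ) : ℕ → ℚ
  | 0 => 0
  | (j+1) => -4478976*(2*(n:ℚ)+3)*(6*(j:ℚ)+1)*(6*(j:ℚ)+5) * cq j
      * (Nat.choose (n+j+1) (2*j) : ℚ) * (-432:ℚ)^n * ((-432:ℚ)⁻¹)^(j+1)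

set_option maxHeartbeats 2000000 in
lemma perk_b (n k : ℕ) :
    ((n:ℚ)+2)^3 * Tb (n+2) k
      + (864*(n:ℚ)^3+3888*(n:ℚ)^2+6240*(n:ℚ)+3528) * Tb (n+1) k
      + 186624*((n:ℚ)+1)^3 * Tb n k
    = Gb n (k+1) - Gb n k := by
  rcases k with _ | j
  · simp only [Tb, Gb, cq]
    norm_num
    ring
  · by_cases hj : j < n
    · -- main case : k = j+1 ≤ n
      simp only [Tb, Gb,
        show n+2+(j+1) = n+j+3 from by omega,
        show n+1+(j+1) = n+j+2 from by omega,
        show n+(j+1) = n+j+1 from by omega,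
        show n+(j+1)+1 = n+j+2 from by omega,
        show 2*(j+1) = 2*j+2 from by omega,
        pow_succ]
      have hnj : ((n:ℚ) - j) ≠ 0 := by
        have : (j:ℚ) < n := by exact_mod_cast hj
        intro h; nlinarith
      have hnj1 : ((n:ℚ) - j + 1) ≠ 0 := by
        have : (j:ℚ) < n := by exact_mod_cast hj
        intro h; nlinarith
      have eZ1 : ((Nat.choose (n+j+1) (2*j+2)) : ℚ)
          = (Nat.choose (n+j+1) (2*j) : ℚ) * (((n:ℚ)-j+1)*((n:ℚ)-j))
            / ((2*(j:ℚ)+2)*(2*(j:ℚ)+1)) := by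
        rw [eq_div_iff (by positivity)]
        have h1 := chooseQ (n+j+1) (2*j+1)
        have h2 := chooseQ (n+j+1) (2*j)
        simp only [show 2*j+1+1 = 2*j+2 from by omega] at h1
        push_cast at h1 h2 ⊢
        linear_combination (2*(j:ℚ)+1)*h1 + ((n:ℚ)-(j:ℚ))*h2
      have eZ2 : ((Nat.choose (n+j+2) (2*j+2)) : ℚ)
          = (Nat.choose (n+j+1) (2*j+2) : ℚ) * ((n:ℚ)+j+2) / ((n:ℚ)-j) := by
        rw [eq_div_iff hnj]
        have h := chooseQ1 (n+j+1) (2*j+2)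
        simp only [show n+j+1+1 = n+j+2 from by omega] at h
        push_cast at h ⊢
        linear_combination h
      have eZ3 : ((Nat.choose (n+j+3) (2*j+2)) : ℚ)
          = (Nat.choose (n+j+2) (2*j+2) : ℚ) * ((n:ℚ)+j+3) / ((n:ℚ)-j+1) := by
        rw [eq_div_iff hnj1]
        have h := chooseQ1 (n+j+2) (2*j+2)
        simp only [show n+j+2+1 = n+j+3 from by omega] at h
        push_cast at h ⊢
        linear_combination h
      have ec : cq (j+1) = cq j * ((6*(j:ℚ)+1)*(6*(j:ℚ)+2)*(6*(j:ℚ)+3)*(6*(j:ℚ)+4)*(6*(j:ℚ)+5)*(6*(j:ℚ)+6))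
          / (((j:ℚ)+1)^3 * ((3*(j:ℚ)+1)*(3*(j:ℚ)+2)*(3*(j:ℚ)+3))) := by
        rw [eq_div_iff (by positivity)]
        linear_combination cq_ratio j
      rw [ec, eZ3, eZ2, eZ1]
      push_cast
      field_simp
      ring
    · by_cases hj2 : j = n
      · subst hj2
        simp only [Tb, Gb,
          show j+2+(j+1) = 2*j+3 from by omega,
          show j+1+(j+1) = 2*j+2 from by omega,
          show j+(j+1) = 2*j+1 from by omega,
          show j+(j+1)+1 = 2*j+2 from by omega,
          show j+j+1 = 2*j+1 from by omega,
          show 2*(j+1) = 2*j+2 from by omega,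
          pow_succ]
        rw [Nat.choose_eq_zero_of_lt (by omega : 2*j+1 < 2*j+2),
          Nat.choose_self,
          show Nat.choose (2*j+3) (2*j+2) = 2*j+3 from by
            rw [show 2*j+3 = (2*j+2)+1 from by omega]; exact Nat.choose_succ_self_right _,
          show Nat.choose (2*j+1) (2*j) = 2*j+1 from by
            rw [show 2*j+1 = (2*j)+1 from by omega]; exact Nat.choose_succ_self_right _]
        have ec : cq (j+1) = cq j * ((6*(j:ℚ)+1)*(6*(j:ℚ)+2)*(6*(j:ℚ)+3)*(6*(j:ℚ)+4)*(6*(j:ℚ)+5)*(6*(j:ℚ)+6))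
            / (((j:ℚ)+1)^3 * ((3*(j:ℚ)+1)*(3*(j:ℚ)+2)*(3*(j:ℚ)+3))) := by
          rw [eq_div_iff (by positivity)]
          linear_combination cq_ratio j
        rw [ec]
        push_cast
        field_simp
        ring
      · by_cases hj3 : j = n+1
        · subst hj3
          simp only [Tb, Gb,
            show n+2+(n+1+1) = 2*n+4 from by omega,
            show n+1+(n+1+1) = 2*n+3 from by omega,
            show n+(n+1+1) = 2*n+2 from by omega,
            show n+(n+1+1)+1 = 2*n+3 from by omega,
            show n+(n+1)+1 = 2*n+2 from by omega,
            show 2*(n+1+1) = 2*n+4 from by omega,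
            show 2*(n+1) = 2*n+2 from by omega,
            pow_succ]
          rw [Nat.choose_eq_zero_of_lt (by omega : 2*n+2 < 2*n+4),
            Nat.choose_eq_zero_of_lt (by omega : 2*n+3 < 2*n+4),
            Nat.choose_self, Nat.choose_self]
          have ec : cq (n+1+1) = cq (n+1) * ((6*((n:ℚ)+1)+1)*(6*((n:ℚ)+1)+2)*(6*((n:ℚ)+1)+3)*(6*((n:ℚ)+1)+4)*(6*((n:ℚ)+1)+5)*(6*((n:ℚ)+1)+6))
              / ((((n:ℚ)+1)+1)^3 * ((3*((n:ℚ)+1)+1)*(3*((n:ℚ)+1)+2)*(3*((n:ℚ)+1)+3))) := by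
            rw [eq_div_iff (by positivity)]
            have := cq_ratio (n+1)
            push_cast at this ⊢
            linear_combination this
          rw [ec]
          push_cast
          field_simp
          ring
        · have h1 : n+2+(j+1) < 2*(j+1) := by omega
          have h2 : n+1+(j+1) < 2*(j+1) := by omega
          have h3 : n+(j+1) < 2*(j+1) := by omega
          have h4 : n+(j+1)+1 < 2*(j+1) := by omega
          have h5 : n+j+1 < 2*j := by omega
          simp only [Tb, Gb, Nat.choose_eq_zero_of_lt h1, Nat.choose_eq_zero_of_lt h2,
            Nat.choose_eq_zero_of_lt h3, Nat.choose_eq_zero_of_lt h4,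
            Nat.choose_eq_zero_of_lt h5]
          norm_num

def bq (n : ℕ) : ℚ := ∑ k ∈ range (n+1), Tb n k

lemma rec_b (n : ℕ) :
    ((n:ℚ)+2)^3 * bq (n+2)
      + (864*(n:ℚ)^3+3888*(n:ℚ)^2+6240*(n:ℚ)+3528) * bq (n+1)
      + 186624*((n:ℚ)+1)^3 * bq n = 0 := by
  have e2 : bq (n+2) = ∑ k ∈ range (n+3), Tb (n+2) k := rfl
  have e1 : bq (n+1) = ∑ k ∈ range (n+3), Tb (n+1) k := by
    rw [show n+3 = (n+2)+1 from rfl, Finset.sum_range_succ]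
    have : Tb (n+1) (n+2) = 0 := by
      simp [Tb, Nat.choose_eq_zero_of_lt (show n+1+(n+2) < 2*(n+2) by omega)]
    rw [this, add_zero]
    rfl
  have e0 : bq n = ∑ k ∈ range (n+3), Tb n k := by
    rw [show n+3 = (n+2)+1 from rfl, Finset.sum_range_succ,
      show n+2 = (n+1)+1 from rfl, Finset.sum_range_succ]
    have h1 : Tb n (n+2) = 0 := by
      simp [Tb, Nat.choose_eq_zero_of_lt (show n+(n+2) < 2*(n+2) by omega)]
    have h2 : Tb n (n+1) = 0 := by
      simp [Tb, Nat.choose_eq_zero_of_lt (show n+(n+1) < 2*(n+1) by omega)]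
    rw [h1, h2, add_zero, add_zero]
    rfl
  rw [e2, e1, e0, Finset.mul_sum, Finset.mul_sum, Finset.mul_sum,
    ← Finset.sum_add_distrib, ← Finset.sum_add_distrib]
  rw [Finset.sum_congr rfl (fun k _ => perk_b n k), Finset.sum_range_sub (Gb n)]
  have hz : Gb n (n+3) = 0 := by
    simp [Gb, Nat.choose_eq_zero_of_lt (show n+(n+2)+1 < 2*(n+2) by omega)]
  rw [hz]
  simp [Gb]

noncomputable def Ga (n k : ℕ) : ℚ :=
  1728 * (k:ℚ)^2 * Aq k * Bq (n+1-k)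
    * (3*(k:ℚ)*(12*((n:ℚ)-(k:ℚ))+23) - 9*(4*((n:ℚ)-(k:ℚ))+9)*(((n:ℚ)-(k:ℚ))+2))
    / (((n:ℚ)-(k:ℚ)+2)^2)

set_option maxHeartbeats 2000000 in
lemma perk_a (m k : ℕ) :
    186624*((k:ℚ)+(m:ℚ)+2)^3 * (Aq k * Bq (m+2))
      - 432*(864*((k:ℚ)+(m:ℚ))^3+3888*((k:ℚ)+(m:ℚ))^2+6240*((k:ℚ)+(m:ℚ))+3528) * (Aq k * Bq (m+1))
      + 186624*((k:ℚ)+(m:ℚ)+1)^3 * (Aq k * Bq m)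
    = Ga (k+m) (k+1) - Ga (k+m) k := by
  have h1 : ((m:ℚ)+1) ≠ 0 := by positivity
  have h2 : ((m:ℚ)+2) ≠ 0 := by positivity
  have h3 : ((k:ℚ)+1) ≠ 0 := by positivity
  have gk : Ga (k+m) k
      = 1728 * (k:ℚ)^2 * Aq k * Bq (m+1)
          * (3*(k:ℚ)*(12*(m:ℚ)+23) - 9*(4*(m:ℚ)+9)*((m:ℚ)+2)) / (((m:ℚ)+2)^2) := by
    simp only [Ga, show k+m+1-k = m+1 from by omega]
    push_cast
    have hden : ((k:ℚ)+(m:ℚ)-(k:ℚ)+2)^2 ≠ 0 := by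
      have e : ((k:ℚ)+(m:ℚ)-(k:ℚ)+2) = (m:ℚ)+2 := by ring
      rw [e]; positivity
    rw [div_eq_div_iff hden (by positivity)]
    ring
  have gk1 : Ga (k+m) (k+1)
      = 1728 * ((k:ℚ)+1)^2 * Aq (k+1) * Bq m
          * (3*((k:ℚ)+1)*(12*((m:ℚ)-1)+23) - 9*(4*((m:ℚ)-1)+9)*(((m:ℚ)-1)+2)) / (((m:ℚ)+1)^2) := by
    simp only [Ga, show k+m+1-(k+1) = m from by omega]
    push_cast
    have hden : ((k:ℚ)+(m:ℚ)-((k:ℚ)+1)+2)^2 ≠ 0 := by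
      have e : ((k:ℚ)+(m:ℚ)-((k:ℚ)+1)+2) = (m:ℚ)+1 := by ring
      rw [e]; positivity
    rw [div_eq_div_iff hden (by positivity)]
    ring
  rw [gk, gk1, show m+2 = (m+1)+1 from rfl, Bq_succ (m+1), Bq_succ m, Aq_succ k]
  push_cast
  field_simp
  ring

set_option maxHeartbeats 2000000 in
lemma boundary_a (n : ℕ) :
    186624*((n:ℚ)+2)^3 * (Aq (n+1) * Bq 1 + Aq (n+2) * Bq 0)
      - 432*(864*(n:ℚ)^3+3888*(n:ℚ)^2+6240*(n:ℚ)+3528) * (Aq (n+1) * Bq 0)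
      + Ga n (n+1) = 0 := by
  simp only [Ga, show n+1-(n+1) = 0 from by omega, Bq_zero]
  rw [show n+2 = (n+1)+1 from rfl, Aq_succ (n+1),
    show Bq 1 = 25/36 from by rw [show (1:ℕ) = 0+1 from rfl, Bq_succ 0, Bq_zero]; norm_num]
  have h1 : ((n:ℚ)+2) ≠ 0 := by positivity
  push_cast
  field_simp
  ring

noncomputable def aq (n : ℕ) : ℚ := ∑ k ∈ range (n+1), Aq k * Bq (n-k)

lemma rec_a (n : ℕ) :
    186624*((n:ℚ)+2)^3 * aq (n+2)
      - 432*(864*(n:ℚ)^3+3888*(n:ℚ)^2+6240*(n:ℚ)+3528) * aq (n+1)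
      + 186624*((n:ℚ)+1)^3 * aq n = 0 := by
  have e2 : aq (n+2) = (∑ k ∈ range (n+1), Aq k * Bq (n+2-k)) + Aq (n+1) * Bq 1 + Aq (n+2) * Bq 0 := by
    unfold aq
    rw [show n+2+1 = (n+2)+1 from rfl, Finset.sum_range_succ,
      show n+2 = (n+1)+1 from rfl, Finset.sum_range_succ]
    simp only [show n+1+1-(n+1+1) = 0 from by omega, show n+1+1-(n+1) = 1 from by omega]
  have e1 : aq (n+1) = (∑ k ∈ range (n+1), Aq k * Bq (n+1-k)) + Aq (n+1) * Bq 0 := by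
    unfold aq
    rw [Finset.sum_range_succ]
    simp only [show n+1-(n+1) = 0 from by omega]
  have key : ∑ k ∈ range (n+1),
      (186624*((n:ℚ)+2)^3 * (Aq k * Bq (n+2-k))
        - 432*(864*(n:ℚ)^3+3888*(n:ℚ)^2+6240*(n:ℚ)+3528) * (Aq k * Bq (n+1-k))
        + 186624*((n:ℚ)+1)^3 * (Aq k * Bq (n-k)))
      = Ga n (n+1) - Ga n 0 := by
    rw [← Finset.sum_range_sub (Ga n)]
    apply Finset.sum_congr rfl
    intro k hk
    have hk' : k ≤ n := by
      have := Finset.mem_range.mp hk; omega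
    obtain ⟨m, hm⟩ : ∃ m, n = k + m := ⟨n - k, by omega⟩
    subst hm
    simp only [show k+m+2-k = m+2 from by omega, show k+m+1-k = m+1 from by omega,
      show k+m-k = m from by omega]
    have := perk_a m k
    push_cast at this ⊢
    linear_combination this
  have hGa0 : Ga n 0 = 0 := by simp [Ga]
  rw [Finset.sum_add_distrib, Finset.sum_sub_distrib, ← Finset.mul_sum, ← Finset.mul_sum,
    ← Finset.mul_sum] at key
  have e0 : aq n = ∑ k ∈ range (n+1), Aq k * Bq (n-k) := rfl
  rw [hGa0, sub_zero] at key
  rw [e2, e1, e0]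
  linear_combination key + boundary_a n

lemma base0 : (-432:ℚ)^0 * aq 0 = bq 0 := by
  simp [aq, bq, Tb, cq, Aq_zero, Bq_zero]

lemma base1 : (-432:ℚ)^1 * aq 1 = bq 1 := by
  have hA1 : Aq 1 = 1/36 := by
    rw [show (1:ℕ) = 0+1 from rfl, Aq_succ 0, Aq_zero]; norm_num
  have hB1 : Bq 1 = 25/36 := by
    rw [show (1:ℕ) = 0+1 from rfl, Bq_succ 0, Bq_zero]; norm_num
  rw [show aq 1 = Aq 0 * Bq 1 + Aq 1 * Bq 0 from by
      simp [aq, Finset.sum_range_succ, Finset.sum_range_one],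
    show bq 1 = Tb 1 0 + Tb 1 1 from by
      simp [bq, Finset.sum_range_succ, Finset.sum_range_one]]
  simp only [Tb, cq, hA1, hB1, Aq_zero, Bq_zero]
  norm_num [Nat.choose]

lemma key_eq (n : ℕ) : (-432:ℚ)^n * aq n = bq n := by
  have H : ∀ n : ℕ, ((-432:ℚ)^n * aq n = bq n) ∧ ((-432:ℚ)^(n+1) * aq (n+1) = bq (n+1)) := by
    intro n
    induction n with
    | zero => exact ⟨base0, base1⟩
    | succ k ih =>
      refine ⟨ih.2, ?_⟩
      have ra := rec_a k
      have rb := rec_b k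
      have hcube : ((k:ℚ)+2)^3 ≠ 0 := by positivity
      have ea : ((k:ℚ)+2)^3 * ((-432:ℚ)^(k+2) * aq (k+2))
          = -(864*(k:ℚ)^3+3888*(k:ℚ)^2+6240*(k:ℚ)+3528) * ((-432:ℚ)^(k+1) * aq (k+1))
            - 186624*((k:ℚ)+1)^3 * ((-432:ℚ)^k * aq k) := by
        rw [pow_succ, pow_succ]
        linear_combination ((-432:ℚ)^k) * ra
      rw [ih.1, ih.2] at ea
      have eb : ((k:ℚ)+2)^3 * bq (k+2)
          = -(864*(k:ℚ)^3+3888*(k:ℚ)^2+6240*(k:ℚ)+3528) * bq (k+1)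
            - 186624*((k:ℚ)+1)^3 * bq k := by
        linear_combination rb
      exact mul_left_cancel₀ hcube (ea.trans eb.symm)
  exact (H n).1

theorem stmt_0 (n : ℕ) :
    (-432 : ℚ) ^ n *
      ∑ k ∈ Finset.range (n + 1),
        ((ascPochhammer ℚ k).eval (1/6) * (ascPochhammer ℚ (n - k)).eval (5/6) /
          ((ascPochhammer ℚ k).eval 1 * (ascPochhammer ℚ (n - k)).eval 1)) ^ 2
    = ∑ k ∈ Finset.range (n + 1),
        (Nat.choose (6*k) (3*k) : ℚ) * (Nat.choose (3*k) (2*k)) * (Nat.choose (2*k) k) *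
          (Nat.choose (n + k) (n - k)) * (-432 : ℚ) ^ (n - k) := by
  have hL : ∑ k ∈ Finset.range (n + 1),
      ((ascPochhammer ℚ k).eval (1/6) * (ascPochhammer ℚ (n - k)).eval (5/6) /
        ((ascPochhammer ℚ k).eval 1 * (ascPochhammer ℚ (n - k)).eval 1)) ^ 2 = aq n := by
    apply Finset.sum_congr rfl
    intro k _
    simp only [aq, Aq, Bq, div_pow, mul_pow, div_mul_div_comm]
  have hR : ∑ k ∈ Finset.range (n + 1),
      (Nat.choose (6*k) (3*k) : ℚ) * (Nat.choose (3*k) (2*k)) * (Nat.choose (2*k) k) *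
        (Nat.choose (n + k) (n - k)) * (-432 : ℚ) ^ (n - k) = bq n := by
    apply Finset.sum_congr rfl
    intro k hk
    have hk' : k ≤ n := by
      have := Finset.mem_range.mp hk; omega
    have hch : Nat.choose (n+k) (n-k) = Nat.choose (n+k) (2*k) := by
      rw [← Nat.choose_symm (show n-k ≤ n+k by omega), show n+k-(n-k) = 2*k from by omega]
    have hpow : ((-432:ℚ))^(n-k) = (-432:ℚ)^n * ((-432:ℚ)⁻¹)^k := by
      rw [inv_pow, eq_mul_inv_iff_mul_eq₀ (pow_ne_zero _ (by norm_num : (-432:ℚ) ≠ 0)),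
        ← pow_add, show n-k+k = n from by omega]
    rw [hch, hpow]
    simp only [Tb, cq]
    ring
  rw [hL, hR]
  exact key_eq n
end

section
/- For every non-negative integer n, (-64)^n * Σ_{k=0}^n ((1/4)_k (3/4)_{n-k} / ((1)_k (1)_{n-k}))^2 = Σ_{k=0}^n C(4k,2k) * C(2k,k)^2 * C(n+k, n-k) * (-64)^{n-k}. -/
open Finset Nat Polynomial

namespace Stmt1Aux


def C4 (k : ℕ) : ℕ := (4*k).choose (2*k) * ((2*k).choose k)^2

noncomputable def ww (n k : ℕ) : ℚ := (C4 k : ℚ) * ((n+k).choose (2*k) : ℚ) * (-1/64)^k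

noncomputable def Gw (n : ℕ) : ℕ → ℚ
  | 0 => 0
  | k+1 => (2*(n:ℚ)+3)*(4*(k:ℚ)+1)*(4*(k:ℚ)+3)*(C4 k : ℚ)*((n+k+1).choose (2*k) : ℚ) * (-1/64)^k

lemma qfac (m : ℕ) : ((m+1)! : ℚ) = (m+1) * m ! := by
  rw [Nat.factorial_succ]; push_cast; ring

lemma c4_succ (k : ℕ) : (C4 (k+1) : ℚ) * ((k:ℚ)+1)^4
    = (C4 k : ℚ) * (4*(k:ℚ)+1)*(4*(k:ℚ)+2)*(4*(k:ℚ)+3)*(4*(k:ℚ)+4) := by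
  unfold C4
  rw [show 4*(k+1) = 4*k+4 from by ring, show 2*(k+1) = 2*k+2 from by ring]
  have h1 : ((4*k+4).choose (2*k+2) : ℚ) = (4*k+4)! / ((2*k+2)! * (2*k+2)!) := by
    rw [Nat.cast_choose ℚ (by omega), show 4*k+4 - (2*k+2) = 2*k+2 from by omega]
  have h2 : ((4*k).choose (2*k) : ℚ) = (4*k)! / ((2*k)! * (2*k)!) := by
    rw [Nat.cast_choose ℚ (by omega), show 4*k - 2*k = 2*k from by omega]
  have h3 : ((2*k+2).choose (k+1) : ℚ) = (2*k+2)! / ((k+1)! * (k+1)!) := by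
    rw [Nat.cast_choose ℚ (by omega), show 2*k+2 - (k+1) = k+1 from by omega]
  have h4 : ((2*k).choose k : ℚ) = (2*k)! / (k ! * k !) := by
    rw [Nat.cast_choose ℚ (by omega), show 2*k - k = k from by omega]
  push_cast [h1, h2, h3, h4]
  rw [show (4*k+4) = 4*k+3+1 from rfl, qfac, show (4*k+3) = 4*k+2+1 from rfl, qfac,
    show (4*k+2) = 4*k+1+1 from rfl, qfac, qfac (4*k),
    show (2*k+2) = 2*k+1+1 from rfl, qfac, qfac (2*k), qfac k]
  push_cast
  field_simp
  ring

lemma chrW1 (n k : ℕ) (h : k ≤ n+1) :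
    ((n+1+k).choose (2*k) : ℚ) * ((n:ℚ)+1-(k:ℚ)) = ((n+k).choose (2*k) : ℚ) * ((n:ℚ)+1+(k:ℚ)) := by
  have h0 := Nat.choose_mul_succ_eq (n+k) (2*k)
  rw [show n+k+1 = n+1+k from by omega] at h0
  have h0q := congrArg (fun x : ℕ => (x : ℚ)) h0
  simp only [Nat.cast_mul] at h0q
  rw [Nat.cast_sub (by omega)] at h0q
  push_cast at h0q
  linear_combination -h0q

lemma chrW2 (n k : ℕ) (h : k+1 ≤ n) :
    ((n+1+k).choose (2*k) : ℚ) * ((n:ℚ)-(k:ℚ)) * ((n:ℚ)-(k:ℚ)+1)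
      = ((n+1+k).choose (2*k+2) : ℚ) * (2*(k:ℚ)+2) * (2*(k:ℚ)+1) := by
  have h1 := Nat.choose_succ_right_eq (n+1+k) (2*k+1)
  have h2 := Nat.choose_succ_right_eq (n+1+k) (2*k)
  have e1 : n+1+k - (2*k+1) = n - k := by omega
  have e2 : n+1+k - 2*k = n - k + 1 := by omega
  rw [e1] at h1
  rw [e2] at h2
  have h1q := congrArg (fun x : ℕ => (x : ℚ)) h1
  have h2q := congrArg (fun x : ℕ => (x : ℚ)) h2
  simp only [Nat.cast_mul] at h1q h2q
  rw [show 2*k+1+1 = 2*k+2 from rfl] at h1q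
  push_cast [Nat.cast_sub (show k ≤ n from by omega)] at h1q h2q
  linear_combination (-(2*(k:ℚ)+1)) * h1q - ((n:ℚ)-(k:ℚ)) * h2q


lemma perW_bd1 (n : ℕ) :
    8*((n:ℚ)+2)^3 * ww (n+2) (n+1) - (2*(n:ℚ)+3)*(8*(n:ℚ)^2+24*(n:ℚ)+21) * ww (n+1) (n+1)
      + 8*((n:ℚ)+1)^3 * ww n (n+1) = Gw n (n+2) - Gw n (n+1) := by
  have gw2 : Gw n (n+2) = (2*(n:ℚ)+3)*(4*((n:ℚ)+1)+1)*(4*((n:ℚ)+1)+3)*(C4 (n+1) : ℚ)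
      *((n+(n+1)+1).choose (2*(n+1)) : ℚ) * (-1/64:ℚ)^(n+1) := by
    show Gw n (n+1+1) = _
    simp only [Gw]
    push_cast
    try ring
  rw [gw2]
  simp only [ww, Gw]
  have z0 : (n+(n+1)).choose (2*(n+1)) = 0 := Nat.choose_eq_zero_of_lt (by omega)
  have z1 : (n+1+(n+1)).choose (2*(n+1)) = 1 := by
    rw [show n+1+(n+1) = 2*(n+1) from by ring]; exact Nat.choose_self _
  have z2 : (n+2+(n+1)).choose (2*(n+1)) = 2*n+3 := by
    have e := Nat.choose_symm (n := 2*n+3) (k := 1) (by omega)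
    rw [show (2*n+3) - 1 = 2*(n+1) from by omega, Nat.choose_one_right] at e
    rw [show n+2+(n+1) = 2*n+3 from by ring]
    exact e
  have z3 : (n+(n+1)+1).choose (2*(n+1)) = 1 := by
    rw [show n+(n+1)+1 = 2*(n+1) from by ring]; exact Nat.choose_self _
  have z4 : (n+n+1).choose (2*n) = 2*n+1 := by
    have e := Nat.choose_symm (n := 2*n+1) (k := 1) (by omega)
    rw [show (2*n+1) - 1 = 2*n from by omega, Nat.choose_one_right] at e
    rw [show n+n+1 = 2*n+1 from by ring]
    exact e
  rw [z0, z1, z2, z3, z4]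
  have eC := c4_succ n
  have hd : ((n:ℚ)+1) ≠ 0 := by positivity
  have eC' : (C4 (n+1) : ℚ)
      = (C4 n : ℚ) * (4*(n:ℚ)+1)*(4*(n:ℚ)+2)*(4*(n:ℚ)+3)*(4*(n:ℚ)+4) / ((n:ℚ)+1)^4 := by
    rw [eq_div_iff (pow_ne_zero 4 hd)]; linear_combination eC
  rw [eC', pow_succ]
  push_cast
  field_simp
  ring

lemma perW_bd2 (n : ℕ) :
    8*((n:ℚ)+2)^3 * ww (n+2) (n+2) - (2*(n:ℚ)+3)*(8*(n:ℚ)^2+24*(n:ℚ)+21) * ww (n+1) (n+2)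
      + 8*((n:ℚ)+1)^3 * ww n (n+2) = Gw n (n+3) - Gw n (n+2) := by
  have gw3 : Gw n (n+3) = 0 := by
    show Gw n (n+2+1) = _
    simp only [Gw]
    have z : (n+(n+2)+1).choose (2*(n+2)) = 0 := Nat.choose_eq_zero_of_lt (by omega)
    rw [z]
    push_cast
    try ring
  have gw2 : Gw n (n+2) = (2*(n:ℚ)+3)*(4*((n:ℚ)+1)+1)*(4*((n:ℚ)+1)+3)*(C4 (n+1) : ℚ)
      *((n+(n+1)+1).choose (2*(n+1)) : ℚ) * (-1/64:ℚ)^(n+1) := by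
    show Gw n (n+1+1) = _
    simp only [Gw]
    push_cast
    try ring
  rw [gw3, gw2]
  simp only [ww]
  have z0 : (n+(n+2)).choose (2*(n+2)) = 0 := Nat.choose_eq_zero_of_lt (by omega)
  have z1 : (n+1+(n+2)).choose (2*(n+2)) = 0 := Nat.choose_eq_zero_of_lt (by omega)
  have z2 : (n+2+(n+2)).choose (2*(n+2)) = 1 := by
    rw [show n+2+(n+2) = 2*(n+2) from by ring]; exact Nat.choose_self _
  have z3 : (n+(n+1)+1).choose (2*(n+1)) = 1 := by
    rw [show n+(n+1)+1 = 2*(n+1) from by ring]; exact Nat.choose_self _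
  rw [z0, z1, z2, z3]
  have eC := c4_succ (n+1)
  have hd : ((n:ℚ)+1+1) ≠ 0 := by positivity
  have eC' : (C4 (n+2) : ℚ)
      = (C4 (n+1) : ℚ) * (4*((n:ℚ)+1)+1)*(4*((n:ℚ)+1)+2)*(4*((n:ℚ)+1)+3)*(4*((n:ℚ)+1)+4) / ((n:ℚ)+1+1)^4 := by
    rw [eq_div_iff (pow_ne_zero 4 hd)]
    push_cast at eC ⊢
    linear_combination eC
  rw [show n+2 = n+1+1 from rfl, eC', pow_succ, pow_succ]
  push_cast
  field_simp
  ring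

lemma perW (n k : ℕ) :
    8*((n:ℚ)+2)^3 * ww (n+2) k - (2*(n:ℚ)+3)*(8*(n:ℚ)^2+24*(n:ℚ)+21) * ww (n+1) k
      + 8*((n:ℚ)+1)^3 * ww n k = Gw n (k+1) - Gw n k := by
  match k with
  | 0 =>
    simp only [ww, Gw, C4]
    norm_num
    ring
  | j+1 =>
    rcases le_or_gt (j+1) n with hj | hj
    · -- main case
      simp only [ww, Gw]
      simp only [show 2*(j+1) = 2*j+2 from by ring, show n+2+(j+1) = n+j+3 from by omega,
        show n+1+(j+1) = n+j+2 from by omega, show n+(j+1) = n+j+1 from by omega,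
        show n+(j+1)+1 = n+j+2 from by omega]
      have h1 := chrW1 n (j+1) (by omega)
      have h2 := chrW1 (n+1) (j+1) (by omega)
      have h3 := chrW2 n j (by omega)
      simp only [show n+1+(j+1) = n+j+2 from by omega, show n+(j+1) = n+j+1 from by omega,
        show n+1+1+(j+1) = n+j+3 from by omega, show 2*(j+1) = 2*j+2 from by ring,
        show n+1+j = n+j+1 from by omega] at h1 h2 h3
      push_cast at h1 h2 h3 ⊢
      have hd0 : ((n:ℚ)-(j:ℚ)) ≠ 0 := by
        have : (j:ℚ) < (n:ℚ) := by exact_mod_cast (by omega : j < n)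
        intro hc; linarith
      have hd1 : ((n:ℚ)-(j:ℚ)+1) ≠ 0 := by
        have h' : (j:ℚ) ≤ (n:ℚ) := by exact_mod_cast (by omega : j ≤ n)
        intro hc; linarith
      have hd2 : ((j:ℚ)+1) ≠ 0 := by positivity
      have e2 : ((n+j+3).choose (2*j+2) : ℚ)
          = ((n+j+2).choose (2*j+2) : ℚ) * ((n:ℚ)+(j:ℚ)+3) / ((n:ℚ)-(j:ℚ)+1) := by
        rw [eq_div_iff hd1]; linear_combination h2
      have e1 : ((n+j+2).choose (2*j+2) : ℚ)
          = ((n+j+1).choose (2*j+2) : ℚ) * ((n:ℚ)+(j:ℚ)+2) / ((n:ℚ)-(j:ℚ)) := by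
        rw [eq_div_iff hd0]; linear_combination h1
      have em : ((n+j+1).choose (2*j) : ℚ)
          = ((n+j+1).choose (2*j+2) : ℚ) * (2*(j:ℚ)+2) * (2*(j:ℚ)+1)
            / (((n:ℚ)-(j:ℚ)) * ((n:ℚ)-(j:ℚ)+1)) := by
        rw [eq_div_iff (mul_ne_zero hd0 hd1)]; linear_combination h3
      have eC := c4_succ j
      have eC' : (C4 (j+1) : ℚ)
          = (C4 j : ℚ) * (4*(j:ℚ)+1)*(4*(j:ℚ)+2)*(4*(j:ℚ)+3)*(4*(j:ℚ)+4) / ((j:ℚ)+1)^4 := by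
        rw [eq_div_iff (pow_ne_zero 4 hd2)]; linear_combination eC
      rw [e2, e1, em, eC', pow_succ]
      field_simp
      ring
    · rcases (by omega : j = n ∨ j = n+1 ∨ n+2 ≤ j) with hj1 | hj1 | hj2
      · rw [hj1]; exact perW_bd1 n
      · rw [hj1]; exact perW_bd2 n
      · have z0 : (n+(j+1)).choose (2*(j+1)) = 0 := Nat.choose_eq_zero_of_lt (by omega)
        have z1 : (n+1+(j+1)).choose (2*(j+1)) = 0 := Nat.choose_eq_zero_of_lt (by omega)
        have z2 : (n+2+(j+1)).choose (2*(j+1)) = 0 := Nat.choose_eq_zero_of_lt (by omega)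
        have z3 : (n+(j+1)+1).choose (2*(j+1)) = 0 := Nat.choose_eq_zero_of_lt (by omega)
        have z4 : (n+j+1).choose (2*j) = 0 := Nat.choose_eq_zero_of_lt (by omega)
        simp only [ww, Gw, z0, z1, z2, z3, z4]
        push_cast
        ring



def Af : ℕ → ℕ
  | 0 => 1
  | k+1 => Af k * (4*k+1)

def Bf : ℕ → ℕ
  | 0 => 1
  | k+1 => Bf k * (4*k+3)

noncomputable def vv (n k : ℕ) : ℚ := ((Af k * Bf (n-k) * n.choose k : ℕ) : ℚ)^2

noncomputable def Gv (n k : ℕ) : ℚ :=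
  (k:ℚ)^2*((n:ℚ)+1)^2*(8*(n:ℚ)*(k:ℚ)-8*(k:ℚ)^2+18*(k:ℚ)-3*(n:ℚ)-6) *
    ((Af k * Bf (n+1-k) * (n+2).choose k : ℕ) : ℚ)^2

lemma bf_shift (n k : ℕ) (h : k ≤ n) : Bf (n+1-k) = Bf (n-k) * (4*(n-k)+3) := by
  obtain ⟨m, rfl⟩ := Nat.exists_eq_add_of_le h
  rw [show k+m+1-k = m+1 from by omega, show k+m-k = m from by omega]
  rfl

lemma chrV1 (n k : ℕ) (h : k ≤ n+1) :
    ((n+1).choose k : ℚ) * ((n:ℚ)+1-(k:ℚ)) = (n.choose k : ℚ) * ((n:ℚ)+1) := by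
  have h0 := Nat.choose_mul_succ_eq n k
  have h0q := congrArg (fun x : ℕ => (x : ℚ)) h0
  simp only [Nat.cast_mul] at h0q
  rw [Nat.cast_sub (by omega)] at h0q
  push_cast at h0q
  linear_combination -h0q

lemma chrV2 (n k : ℕ) (h : k ≤ n+2) :
    ((n+2).choose (k+1) : ℚ) * ((k:ℚ)+1) = ((n+2).choose k : ℚ) * ((n:ℚ)+2-(k:ℚ)) := by
  have h0 := Nat.choose_succ_right_eq (n+2) k
  have h0q := congrArg (fun x : ℕ => (x : ℚ)) h0
  simp only [Nat.cast_mul] at h0q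
  rw [Nat.cast_sub (by omega)] at h0q
  push_cast at h0q
  linear_combination h0q

lemma perV (n k : ℕ) :
    ((n:ℚ)+1)^2*((n:ℚ)+2)^3 * vv (n+2) k
      - 2*(2*(n:ℚ)+3)*(8*(n:ℚ)^2+24*(n:ℚ)+21)*((n:ℚ)+1)^2*((n:ℚ)+2)^2 * vv (n+1) k
      + 256*((n:ℚ)+1)^7*((n:ℚ)+2)^2 * vv n k = Gv n (k+1) - Gv n k := by
  rcases le_or_gt k n with hk | hk
  · -- main case k ≤ n
    have hb1 : Bf (n+1-k) = Bf (n-k) * (4*(n-k)+3) := bf_shift n k hk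
    have hb2 : Bf (n+2-k) = Bf (n-k) * (4*(n-k)+3) * (4*(n-k)+7) := by
      have h' := bf_shift (n+1) k (by omega)
      rw [show n+1+1-k = n+2-k from by omega, hb1, show n+1-k = (n-k)+1 from by omega] at h'
      rw [h']
      ring_nf
    simp only [vv, Gv, show n+1-(k+1) = n-k from by omega, hb1, hb2, Af]
    have h1 := chrV1 n k (by omega)
    have h2 := chrV1 (n+1) k (by omega)
    have h3 := chrV2 n k (by omega)
    rw [show n+1+1 = n+2 from by omega] at h2
    push_cast [Nat.cast_sub hk] at h1 h2 h3 ⊢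
    have hd1 : ((n:ℚ)+1-(k:ℚ)) ≠ 0 := by
      have : (k:ℚ) ≤ (n:ℚ) := by exact_mod_cast hk
      intro hc; linarith
    have hd2 : ((n:ℚ)+2-(k:ℚ)) ≠ 0 := by
      have : (k:ℚ) ≤ (n:ℚ) := by exact_mod_cast hk
      intro hc; linarith
    have hd3 : ((k:ℚ)+1) ≠ 0 := by positivity
    have e3 : ((n+2).choose (k+1) : ℚ)
        = ((n+2).choose k : ℚ) * ((n:ℚ)+2-(k:ℚ)) / ((k:ℚ)+1) := by
      rw [eq_div_iff hd3]; linear_combination h3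
    have e2 : ((n+2).choose k : ℚ)
        = ((n+1).choose k : ℚ) * ((n:ℚ)+2) / ((n:ℚ)+2-(k:ℚ)) := by
      rw [eq_div_iff hd2]; linear_combination h2
    have e1 : ((n+1).choose k : ℚ)
        = (n.choose k : ℚ) * ((n:ℚ)+1) / ((n:ℚ)+1-(k:ℚ)) := by
      rw [eq_div_iff hd1]; linear_combination h1
    rw [e3, e2, e1]
    field_simp
    ring
  · rcases (by omega : k = n+1 ∨ k = n+2 ∨ n+3 ≤ k) with hk1 | hk1 | hk1
    · subst hk1
      have z0 : n.choose (n+1) = 0 := Nat.choose_eq_zero_of_lt (by omega)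
      have z1 : (n+1).choose (n+1) = 1 := Nat.choose_self _
      have z2 : (n+2).choose (n+1) = n+2 := by
        have e := Nat.choose_symm (n := n+2) (k := 1) (by omega)
        rw [show (n+2) - 1 = n+1 from by omega, Nat.choose_one_right] at e
        exact e
      have z3 : (n+2).choose (n+1+1) = 1 := by
        rw [show n+1+1 = n+2 from by omega]; exact Nat.choose_self _
      simp only [vv, Gv, z0, z1, z2, z3,
        show n+1-(n+1) = 0 from by omega, show n+2-(n+1) = 1 from by omega,
        show n+1-(n+1+1) = 0 from by omega, show (n+1)-(n+1) = 0 from by omega,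
        show n-(n+1) = 0 from by omega, Af, Bf]
      push_cast
      ring
    · subst hk1
      have z0 : n.choose (n+2) = 0 := Nat.choose_eq_zero_of_lt (by omega)
      have z1 : (n+1).choose (n+2) = 0 := Nat.choose_eq_zero_of_lt (by omega)
      have z2 : (n+2).choose (n+2) = 1 := Nat.choose_self _
      have z3 : (n+2).choose (n+2+1) = 0 := Nat.choose_eq_zero_of_lt (by omega)
      simp only [vv, Gv, z0, z1, z2, z3,
        show n+2-(n+2) = 0 from by omega, show n+1-(n+2) = 0 from by omega,
        show n+1-(n+2+1) = 0 from by omega, show n-(n+2) = 0 from by omega, Af, Bf]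
      push_cast
      ring
    · have z0 : n.choose k = 0 := Nat.choose_eq_zero_of_lt (by omega)
      have z1 : (n+1).choose k = 0 := Nat.choose_eq_zero_of_lt (by omega)
      have z2 : (n+2).choose k = 0 := Nat.choose_eq_zero_of_lt (by omega)
      have z3 : (n+2).choose (k+1) = 0 := Nat.choose_eq_zero_of_lt (by omega)
      simp only [vv, Gv, z0, z1, z2, z3]
      push_cast
      ring

noncomputable def Vs (n : ℕ) : ℚ := ∑ k ∈ range (n+1), vv n k
noncomputable def Ws (n : ℕ) : ℚ := ∑ k ∈ range (n+1), ww n k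

lemma vv_zero {n k : ℕ} (h : n < k) : vv n k = 0 := by
  simp [vv, Nat.choose_eq_zero_of_lt h]

lemma ww_zero {n k : ℕ} (h : n < k) : ww n k = 0 := by
  have : (n+k).choose (2*k) = 0 := Nat.choose_eq_zero_of_lt (by omega)
  simp [ww, this]

lemma Vs_ext (n N : ℕ) (h : n+1 ≤ N) : Vs n = ∑ k ∈ range N, vv n k := by
  unfold Vs
  apply Finset.sum_subset (Finset.range_subset_range.2 h)
  intro x _ hx
  simp only [Finset.mem_range, not_lt] at hx
  exact vv_zero (by omega)

lemma Ws_ext (n N : ℕ) (h : n+1 ≤ N) : Ws n = ∑ k ∈ range N, ww n k := by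
  unfold Ws
  apply Finset.sum_subset (Finset.range_subset_range.2 h)
  intro x _ hx
  simp only [Finset.mem_range, not_lt] at hx
  exact ww_zero (by omega)

lemma recV (n : ℕ) :
    ((n:ℚ)+1)^2*((n:ℚ)+2)^3 * Vs (n+2)
      - 2*(2*(n:ℚ)+3)*(8*(n:ℚ)^2+24*(n:ℚ)+21)*((n:ℚ)+1)^2*((n:ℚ)+2)^2 * Vs (n+1)
      + 256*((n:ℚ)+1)^7*((n:ℚ)+2)^2 * Vs n = 0 := by
  rw [Vs_ext (n+2) (n+3) (by omega), Vs_ext (n+1) (n+3) (by omega), Vs_ext n (n+3) (by omega)]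
  rw [Finset.mul_sum, Finset.mul_sum, Finset.mul_sum, ← Finset.sum_sub_distrib,
    ← Finset.sum_add_distrib]
  rw [Finset.sum_congr rfl (fun k _ => perV n k), Finset.sum_range_sub (Gv n)]
  have h1 : Gv n (n+3) = 0 := by
    have : (n+2).choose (n+3) = 0 := Nat.choose_eq_zero_of_lt (by omega)
    simp [Gv, this]
  have h2 : Gv n 0 = 0 := by simp [Gv]
  rw [h1, h2]; ring

lemma recW (n : ℕ) :
    8*((n:ℚ)+2)^3 * Ws (n+2) - (2*(n:ℚ)+3)*(8*(n:ℚ)^2+24*(n:ℚ)+21) * Ws (n+1)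
      + 8*((n:ℚ)+1)^3 * Ws n = 0 := by
  rw [Ws_ext (n+2) (n+3) (by omega), Ws_ext (n+1) (n+3) (by omega), Ws_ext n (n+3) (by omega)]
  rw [Finset.mul_sum, Finset.mul_sum, Finset.mul_sum, ← Finset.sum_sub_distrib,
    ← Finset.sum_add_distrib]
  rw [Finset.sum_congr rfl (fun k _ => perW n k), Finset.sum_range_sub (Gw n)]
  have h1 : Gw n (n+3) = 0 := by
    show Gw n (n+2+1) = 0
    have : (n+(n+2)+1).choose (2*(n+2)) = 0 := Nat.choose_eq_zero_of_lt (by omega)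
    simp [Gw, this]
  rw [h1]
  simp [Gw]

lemma key : ∀ n : ℕ, Vs n = 16^n * ((n ! : ℚ))^2 * Ws n := by
  intro n
  induction n using Nat.strong_induction_on with
  | _ n ih =>
    match n with
    | 0 =>
      norm_num [Vs, Ws, vv, ww, Af, Bf, C4]
    | 1 =>
      norm_num [Vs, Ws, Finset.sum_range_succ, Finset.sum_range_zero, vv, ww, Af, Bf, C4,
        show Nat.choose 4 2 = 6 from by decide]
    | (m+2) =>
      have ih1 := ih (m+1) (by omega)
      have ih0 := ih m (by omega)
      have hV := recV m
      have hW := recW m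
      have hcan : ((m:ℚ)+1)^2*((m:ℚ)+2)^3 ≠ 0 := by positivity
      apply mul_left_cancel₀ hcan
      have hf2 : ((m+2)! : ℚ) = (((m:ℚ)+1)+1)*(((m:ℚ)+1)*(m ! : ℚ)) := by
        rw [show m+2 = m+1+1 from rfl, qfac, qfac]; push_cast; ring_nf
      have hf1 : ((m+1)! : ℚ) = ((m:ℚ)+1)*(m ! : ℚ) := by
        rw [qfac]
      rw [hf1, show (16:ℚ)^(m+1) = 16^m*16 from by rw [pow_succ]] at ih1
      rw [hf2, show (16:ℚ)^(m+2) = 16^m*16*16 from by rw [pow_succ, pow_succ]]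
      linear_combination hV + (2*(2*(m:ℚ)+3)*(8*(m:ℚ)^2+24*(m:ℚ)+21)*((m:ℚ)+1)^2*((m:ℚ)+2)^2) * ih1
        + (-256*((m:ℚ)+1)^7*((m:ℚ)+2)^2) * ih0
        + (-32*(16:ℚ)^m*((m:ℚ)+1)^4*((m:ℚ)+2)^2*((m ! : ℚ))^2) * hW

lemma poch14 (k : ℕ) : (ascPochhammer ℚ k).eval (1/4) = (Af k : ℚ) / 4^k := by
  induction k with
  | zero => simp [Af]
  | succ k ih =>
    rw [ascPochhammer_succ_eval, ih, show Af (k+1) = Af k * (4*k+1) from rfl]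
    push_cast
    have h4 : ((4:ℚ))^k ≠ 0 := by positivity
    field_simp
    ring

lemma poch34 (k : ℕ) : (ascPochhammer ℚ k).eval (3/4) = (Bf k : ℚ) / 4^k := by
  induction k with
  | zero => simp [Bf]
  | succ k ih =>
    rw [ascPochhammer_succ_eval, ih, show Bf (k+1) = Bf k * (4*k+3) from rfl]
    push_cast
    have h4 : ((4:ℚ))^k ≠ 0 := by positivity
    field_simp
    ring

lemma L1 (n : ℕ) :
    (-64 : ℚ) ^ n *
      ∑ k ∈ Finset.range (n + 1),
        ((ascPochhammer ℚ k).eval (1/4) * (ascPochhammer ℚ (n - k)).eval (3/4) /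
          ((ascPochhammer ℚ k).eval 1 * (ascPochhammer ℚ (n - k)).eval 1)) ^ 2
    = (-4:ℚ)^n * Vs n / ((n ! : ℚ))^2 := by
  rw [Vs, Finset.mul_sum, Finset.mul_sum, Finset.sum_div]
  apply Finset.sum_congr rfl
  intro k hk
  rw [Finset.mem_range] at hk
  obtain ⟨m, rfl⟩ := Nat.exists_eq_add_of_le (show k ≤ n from by omega)
  rw [poch14, poch34, ascPochhammer_eval_one, ascPochhammer_eval_one, vv,
    show k+m-k = m from by omega]
  push_cast
  rw [Nat.cast_choose ℚ (show k ≤ k+m from by omega), show k+m-k = m from by omega]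
  have h1 : ((4:ℚ))^k ≠ 0 := by positivity
  have h2 : ((4:ℚ))^m ≠ 0 := by positivity
  have h3 : ((k ! : ℚ)) ≠ 0 := Nat.cast_ne_zero.2 (Nat.factorial_ne_zero k)
  have h4 : ((m ! : ℚ)) ≠ 0 := Nat.cast_ne_zero.2 (Nat.factorial_ne_zero m)
  have h5 : (((k+m)! : ℚ)) ≠ 0 := Nat.cast_ne_zero.2 (Nat.factorial_ne_zero _)
  rw [show ((-64:ℚ))^(k+m) = (-64)^k * (-64)^m from pow_add _ _ _,
    show ((-4:ℚ))^(k+m) = (-4)^k * (-4)^m from pow_add _ _ _]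
  have hk64 : ((-64:ℚ))^k = (-4)^k * 4^(k*2) := by
    rw [show ((-64):ℚ) = (-4)*4^2 from by norm_num, mul_pow, ← pow_mul, mul_comm 2 k]
  have hm64 : ((-64:ℚ))^m = (-4)^m * 4^(m*2) := by
    rw [show ((-64):ℚ) = (-4)*4^2 from by norm_num, mul_pow, ← pow_mul, mul_comm 2 m]
  field_simp
  rw [hk64, hm64]
  ring

lemma L2 (n : ℕ) :
    ∑ k ∈ Finset.range (n + 1),
        (Nat.choose (4*k) (2*k) : ℚ) * (Nat.choose (2*k) k) ^ 2 *
          (Nat.choose (n + k) (n - k)) * (-64 : ℚ) ^ (n - k)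
      = (-64:ℚ)^n * Ws n := by
  rw [Ws, Finset.mul_sum]
  apply Finset.sum_congr rfl
  intro k hk
  rw [Finset.mem_range] at hk
  obtain ⟨m, rfl⟩ := Nat.exists_eq_add_of_le (show k ≤ n from by omega)
  rw [ww, show k+m-k = m from by omega, C4]
  have e : (k+m+k).choose m = (k+m+k).choose (2*k) := by
    rw [← Nat.choose_symm (show 2*k ≤ k+m+k from by omega),
      show k+m+k - 2*k = m from by omega]
  rw [e]
  push_cast
  rw [show ((-64:ℚ))^(k+m) = (-64)^k * (-64)^m from pow_add _ _ _]
  rw [show ((-1:ℚ)/64)^k = ((-1)/64)^k from rfl]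
  have : ((-64:ℚ))^k * ((-1/64:ℚ))^k = 1 := by
    rw [← mul_pow]
    norm_num
  linear_combination (-((((4*k).choose (2*k) : ℚ)) * (((2*k).choose k : ℚ))^2
    * (((k+m+k).choose (2*k) : ℚ)) * (-64:ℚ)^m)) * this


end Stmt1Aux

open Stmt1Aux in
theorem stmt_1 (n : ℕ) :
    (-64 : ℚ) ^ n *
      ∑ k ∈ Finset.range (n + 1),
        ((ascPochhammer ℚ k).eval (1/4) * (ascPochhammer ℚ (n - k)).eval (3/4) /
          ((ascPochhammer ℚ k).eval 1 * (ascPochhammer ℚ (n - k)).eval 1)) ^ 2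
    = ∑ k ∈ Finset.range (n + 1),
        (Nat.choose (4*k) (2*k) : ℚ) * (Nat.choose (2*k) k) ^ 2 *
          (Nat.choose (n + k) (n - k)) * (-64 : ℚ) ^ (n - k) := by
  rw [L1 n, L2 n, key n]
  have hf : ((n ! : ℚ))^2 ≠ 0 := pow_ne_zero 2 (Nat.cast_ne_zero.2 (Nat.factorial_ne_zero n))
  rw [show ((-64:ℚ))^n = (-4)^n * 16^n from by rw [← mul_pow]; norm_num]
  field_simp
end

section
/- For every non-negative integer n, (-27)^n * Σ_{k=0}^n ((1/3)_k (2/3)_{n-k} / ((1)_k (1)_{n-k}))^2 = Σ_{k=0}^n C(3k,k) * C(2k,k)^2 * C(n+k, n-k) * (-27)^{n-k}. -/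
open Finset

namespace Stmt2Aux

noncomputable def XX (k : ℕ) : ℚ := (ascPochhammer ℚ k).eval (1/3)
noncomputable def YY (m : ℕ) : ℚ := (ascPochhammer ℚ m).eval (2/3)
def q (m : ℕ) : ℚ := m.factorial

lemma q_ne (m : ℕ) : q m ≠ 0 := by
  simp [q, Nat.factorial_ne_zero]

lemma q_succ (m : ℕ) : q (m + 1) = ((m : ℚ) + 1) * q m := by
  show ((m+1).factorial : ℚ) = _
  rw [Nat.factorial_succ]
  push_cast [q]
  ring

lemma q_zero : q 0 = 1 := by simp [q]
lemma q_one : q 1 = 1 := by simp [q]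

lemma XX_succ (k : ℕ) : XX (k + 1) = XX k * (1/3 + k) := by
  simp [XX, ascPochhammer_succ_eval]

lemma YY_succ (m : ℕ) : YY (m + 1) = YY m * (2/3 + m) := by
  simp [YY, ascPochhammer_succ_eval]

lemma XX_zero : XX 0 = 1 := by simp [XX]
lemma YY_zero : YY 0 = 1 := by simp [YY]

/-- summands -/
noncomputable def fL (k m : ℕ) : ℚ :=
  (-27) ^ (k + m) * (XX k * YY m / (q k * q m)) ^ 2

noncomputable def fR (k m : ℕ) : ℚ :=
  q (3*k) * q (2*k + m) * (-27) ^ m / (q k ^ 5 * q m)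

/-- certificates -/
noncomputable def gL (k mp : ℕ) : ℚ :=
  (-27) ^ (k + mp) * XX k ^ 2 * YY mp ^ 2 *
    ((k:ℚ)^2 * ((24 + 108*((mp:ℚ)-2) + 174*((mp:ℚ)-2)^2 + 117*((mp:ℚ)-2)^3 + 27*((mp:ℚ)-2)^4)
      + k * (44 + 156*((mp:ℚ)-2) + 171*((mp:ℚ)-2)^2 + 54*((mp:ℚ)-2)^3)))
    / (q k ^ 2 * q mp ^ 2 * (3*(mp:ℚ) - 4)^2 * (3*(mp:ℚ) - 1)^2)

noncomputable def gR (k mp : ℕ) : ℚ :=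
  -2 * (2*(k:ℚ) + 2*mp - 1) * (k:ℚ)^4 * q (3*k) * (-27) ^ mp * q (2*k + mp - 2)
    / (q k ^ 5 * q mp)

/-- recurrence coefficients -/
def c2 (n : ℕ) : ℚ := ((n:ℚ) + 2)^3
def c1 (n : ℕ) : ℚ := 3 * (2*(n:ℚ) + 3) * (9*(n:ℚ)^2 + 27*n + 23)
def c0 (n : ℕ) : ℚ := 729 * ((n:ℚ) + 1)^3

noncomputable def S (f : ℕ → ℕ → ℚ) (n : ℕ) : ℚ := ∑ k ∈ Finset.range (n+1), f k (n - k)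

/-- generic: certificate implies recurrence -/
lemma rec_of_cert (f g : ℕ → ℕ → ℚ)
    (hg0 : ∀ n, g 0 (n+2) = 0)
    (hgen : ∀ k m, c2 (k+m) * f k (m+2) + c1 (k+m) * f k (m+1) + c0 (k+m) * f k m
        = g (k+1) (m+1) - g k (m+2))
    (hb1 : ∀ n, c2 n * f (n+1) 1 + c1 n * f (n+1) 0 = g (n+2) 0 - g (n+1) 1)
    (hb2 : ∀ n, c2 n * f (n+2) 0 = - g (n+2) 0)
    (n : ℕ) :
    c2 n * S f (n+2) + c1 n * S f (n+1) + c0 n * S f n = 0 := by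
  classical
  set W : ℕ → ℕ → ℚ := fun j k => if k ≤ j then f k (j - k) else 0 with hW
  have hS : ∀ j N, j + 1 ≤ N → S f j = ∑ k ∈ Finset.range N, W j k := by
    intro j N hN
    rw [S, ← Finset.sum_range_add_sum_Ico _ hN]
    have h1 : ∑ k ∈ Finset.range (j+1), W j k = ∑ k ∈ Finset.range (j+1), f k (j - k) := by
      apply Finset.sum_congr rfl
      intro k hk
      simp only [Finset.mem_range] at hk
      simp [hW, Nat.lt_succ_iff.mp hk]
    have h2 : ∑ k ∈ Finset.Ico (j+1) N, W j k = 0 := by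
      apply Finset.sum_eq_zero
      intro k hk
      simp only [Finset.mem_Ico] at hk
      simp [hW]; omega
    rw [h1, h2, add_zero]
  set G : ℕ → ℚ := fun k => if k ≤ n + 2 then g k (n + 2 - k) else 0 with hG
  have key : ∀ k ∈ Finset.range (n+3),
      c2 n * W (n+2) k + c1 n * W (n+1) k + c0 n * W n k = G (k+1) - G k := by
    intro k hk
    simp only [Finset.mem_range] at hk
    rcases Nat.lt_or_ge k (n+1) with hkn | hkn
    · -- k ≤ n
      have hkn' : k ≤ n := by omega
      have e2 : n + 2 - k = (n - k) + 2 := by omega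
      have e1 : n + 1 - k = (n - k) + 1 := by omega
      have e0 : k ≤ n + 2 := by omega
      have e0' : k ≤ n + 1 := by omega
      have e3 : n + 2 - (k+1) = (n - k) + 1 := by omega
      have e4 : k + 1 ≤ n + 2 := by omega
      simp only [hW, hG, if_pos e0, if_pos e0', if_pos hkn', if_pos e4, e2, e1, e3]
      have := hgen k (n - k)
      rw [show k + (n - k) = n by omega] at this
      exact this
    rcases Nat.lt_or_ge k (n+2) with hk2 | hk2
    · -- k = n+1
      have hk1 : k = n + 1 := by omega
      subst hk1
      simp only [hW, hG, show n+1+1 = n+2 by omega, show n+2-(n+1) = 1 by omega,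
        show n+1-(n+1) = 0 by omega, show n+2-(n+2) = 0 by omega]
      rw [if_pos (show n+1 ≤ n+2 by omega), if_pos (show n+1 ≤ n+1 by omega),
        if_neg (show ¬ (n+1 ≤ n) by omega), if_pos (show n+2 ≤ n+2 by omega)]
      rw [if_pos (show n+1 ≤ n+2 by omega)]
      rw [mul_zero, add_zero]
      exact hb1 n
    · -- k = n+2
      have hk1 : k = n + 2 := by omega
      subst hk1
      simp only [hW, hG, show n+2+1 = n+3 by omega, show n+2-(n+2) = 0 by omega]
      rw [if_pos (show n+2 ≤ n+2 by omega), if_neg (show ¬ (n+2 ≤ n+1) by omega),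
        if_neg (show ¬ (n+2 ≤ n) by omega), if_neg (show ¬ (n+3 ≤ n+2) by omega)]
      rw [if_pos (show n+2 ≤ n+2 by omega)]
      rw [mul_zero, add_zero, mul_zero, add_zero, zero_sub]
      exact hb2 n
  calc c2 n * S f (n+2) + c1 n * S f (n+1) + c0 n * S f n
      = ∑ k ∈ Finset.range (n+3),
          (c2 n * W (n+2) k + c1 n * W (n+1) k + c0 n * W n k) := by
        rw [hS (n+2) (n+3) (by omega), hS (n+1) (n+3) (by omega), hS n (n+3) (by omega)]
        rw [Finset.mul_sum, Finset.mul_sum, Finset.mul_sum, ← Finset.sum_add_distrib,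
          ← Finset.sum_add_distrib]
    _ = ∑ k ∈ Finset.range (n+3), (G (k+1) - G k) := Finset.sum_congr rfl key
    _ = G (n+3) - G 0 := Finset.sum_range_sub G (n+3)
    _ = 0 := by
        simp only [hG, if_neg (by omega : ¬ n+3 ≤ n+2), if_pos (by omega : 0 ≤ n+2)]
        rw [show n + 2 - 0 = n + 2 by omega, hg0, zero_sub, neg_zero]

lemma nz_cast_add (m : ℕ) (c : ℚ) (hc : 0 < c) : (m:ℚ) + c ≠ 0 := by positivity

lemma nz1 (m : ℕ) : 3*(m:ℚ) - 1 ≠ 0 := by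
  intro h
  have : (3*m : ℚ) = 1 := by linarith
  have : (3*m : ℕ) = 1 := by exact_mod_cast this
  omega

lemma nz4 (m : ℕ) : 3*(m:ℚ) - 4 ≠ 0 := by
  intro h
  have : (3*m : ℚ) = 4 := by linarith
  have : (3*m : ℕ) = 4 := by exact_mod_cast this
  omega

lemma nz2 (m : ℕ) : 3*(m:ℚ) + 2 ≠ 0 := by positivity
lemma nz5 (m : ℕ) : 3*(m:ℚ) + 5 ≠ 0 := by positivity

lemma frac_combine (a1 a2 a3 a4 a5 b1 b2 b3 b4 b5 : ℚ)
    (h1 : b1 ≠ 0) (h2 : b2 ≠ 0) (h3 : b3 ≠ 0) (h4 : b4 ≠ 0) (h5 : b5 ≠ 0)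
    (h : a1*(b2*b3*b4*b5) + a2*(b1*b3*b4*b5) + a3*(b1*b2*b4*b5)
        = a4*(b1*b2*b3*b5) - a5*(b1*b2*b3*b4)) :
    a1/b1 + a2/b2 + a3/b3 = a4/b4 - a5/b5 := by
  rw [div_add_div _ _ h1 h2, div_add_div _ _ (mul_ne_zero h1 h2) h3,
    div_sub_div _ _ h4 h5,
    div_eq_div_iff (mul_ne_zero (mul_ne_zero h1 h2) h3) (mul_ne_zero h4 h5)]
  linear_combination h

set_option maxHeartbeats 2000000 in
lemma genL (k m : ℕ) :
    c2 (k+m) * fL k (m+2) + c1 (k+m) * fL k (m+1) + c0 (k+m) * fL k m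
      = gL (k+1) (m+1) - gL k (m+2) := by
  have hk := q_ne k
  have hm := q_ne m
  have hk1 : (k:ℚ) + 1 ≠ 0 := by positivity
  have hm1 : (m:ℚ) + 1 ≠ 0 := by positivity
  have hm1' : (m:ℚ) + 1 + 1 ≠ 0 := by positivity
  have hA : 3*((m:ℚ)+1) - 4 ≠ 0 := by have := nz1 m; intro h; exact this (by linarith)
  have hB : 3*((m:ℚ)+1) - 1 ≠ 0 := by have := nz2 m; intro h; exact this (by linarith)
  have hC : 3*((m:ℚ)+1+1) - 4 ≠ 0 := by have := nz2 m; intro h; exact this (by linarith)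
  have hD : 3*((m:ℚ)+1+1) - 1 ≠ 0 := by have := nz5 m; intro h; exact this (by linarith)
  simp only [fL, gL, c2, c1, c0,
    show k+(m+2) = k+m+1+1 by omega, show k+(m+1) = k+m+1 by omega,
    show (k+1)+(m+1) = k+m+1+1 by omega]
  simp only [show m+2 = m+1+1 by omega]
  simp only [show ((-27:ℚ))^(k+m+1+1) = (-27)^(k+m)*729 from by rw [pow_succ, pow_succ]; ring,
    show ((-27:ℚ))^(k+m+1) = (-27)^(k+m)*(-27) from by rw [pow_succ]]
  simp only [XX_succ, YY_succ, q_succ]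
  push_cast
  simp only [div_pow, ← mul_div_assoc]
  apply frac_combine
  · exact pow_ne_zero _ (mul_ne_zero hk (mul_ne_zero hm1' (mul_ne_zero hm1 hm)))
  · exact pow_ne_zero _ (mul_ne_zero hk (mul_ne_zero hm1 hm))
  · exact pow_ne_zero _ (mul_ne_zero hk hm)
  · apply_rules [mul_ne_zero, pow_ne_zero]
  · apply_rules [mul_ne_zero, pow_ne_zero]
  · ring


lemma frac_combine4 (a1 a2 a4 a5 b1 b2 b4 b5 : ℚ)
    (h1 : b1 ≠ 0) (h2 : b2 ≠ 0) (h4 : b4 ≠ 0) (h5 : b5 ≠ 0)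
    (h : a1*(b2*b4*b5) + a2*(b1*b4*b5) = a4*(b1*b2*b5) - a5*(b1*b2*b4)) :
    a1/b1 + a2/b2 = a4/b4 - a5/b5 := by
  rw [div_add_div _ _ h1 h2, div_sub_div _ _ h4 h5,
    div_eq_div_iff (mul_ne_zero h1 h2) (mul_ne_zero h4 h5)]
  linear_combination h

lemma YY_one : YY 1 = 2/3 := by
  have := YY_succ 0
  simpa [YY_zero] using this

set_option maxHeartbeats 1000000 in
lemma b1L (n : ℕ) : c2 n * fL (n+1) 1 + c1 n * fL (n+1) 0 = gL (n+2) 0 - gL (n+1) 1 := by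
  have hq := q_ne (n+1)
  have hn1 : (n:ℚ) + 1 ≠ 0 := by positivity
  have hn2 : (n:ℚ) + 1 + 1 ≠ 0 := by positivity
  simp only [fL, gL, c2, c1, c0]
  simp only [show n+2 = n+1+1 from by omega]
  simp only [show ((-27:ℚ))^(n+1+1+0) = (-27)^(n+1)*(-27) from by rw [add_zero, pow_succ],
    show ((-27:ℚ))^(n+1+1) = (-27)^(n+1)*(-27) from by rw [pow_succ],
    show ((-27:ℚ))^(n+1+0) = (-27)^(n+1) from by rw [add_zero]]
  simp only [XX_succ, YY_succ, q_succ, YY_one, YY_zero, q_zero, q_one]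
  push_cast
  simp only [div_pow, ← mul_div_assoc]
  apply frac_combine4
  · apply_rules [mul_ne_zero, pow_ne_zero] <;> first | exact q_ne _ | norm_num
  · apply_rules [mul_ne_zero, pow_ne_zero] <;> first | exact q_ne _ | norm_num
  · apply_rules [mul_ne_zero, pow_ne_zero] <;> first | exact q_ne _ | norm_num
  · apply_rules [mul_ne_zero, pow_ne_zero] <;> first | exact q_ne _ | norm_num
  · ring

set_option maxHeartbeats 1000000 in
lemma b2L (n : ℕ) : c2 n * fL (n+2) 0 = - gL (n+2) 0 := by
  have hq := q_ne (n+1)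
  have hn1 : (n:ℚ) + 1 ≠ 0 := by positivity
  have hn2 : (n:ℚ) + 1 + 1 ≠ 0 := by positivity
  simp only [fL, gL, c2]
  simp only [show n+2 = n+1+1 from by omega]
  simp only [show ((-27:ℚ))^(n+1+1+0) = (-27)^(n+1)*(-27) from by rw [add_zero, pow_succ]]
  simp only [XX_succ, YY_succ, q_succ, YY_one, YY_zero, q_zero, q_one]
  push_cast
  simp only [div_pow, ← mul_div_assoc, ← neg_div]
  rw [div_eq_div_iff]
  · ring
  · apply_rules [mul_ne_zero, pow_ne_zero] <;> first | exact q_ne _ | norm_num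
  · apply_rules [mul_ne_zero, pow_ne_zero] <;> first | exact q_ne _ | norm_num


lemma g0L (n : ℕ) : gL 0 (n+2) = 0 := by
  simp [gL]

lemma genR (k m : ℕ) :
    c2 (k+m) * fR k (m+2) + c1 (k+m) * fR k (m+1) + c0 (k+m) * fR k m
      = gR (k+1) (m+1) - gR k (m+2) := by
  have hk := q_ne k
  have hm := q_ne m
  have hk1 : (k:ℚ) + 1 ≠ 0 := by positivity
  have hm1 : (m:ℚ) + 1 ≠ 0 := by positivity
  have hm2 : (m:ℚ) + 2 ≠ 0 := by positivity
  simp only [fR, gR, c2, c1, c0,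
    show 2*(k+1)+(m+1)-2 = 2*k+m+1 by omega,
    show 2*k+(m+2)-2 = 2*k+m by omega,
    show 3*(k+1) = 3*k+1+1+1 by omega,
    show 2*k+(m+2) = 2*k+m+1+1 by omega,
    show 2*k+(m+1) = 2*k+m+1 by omega,
    show m+2 = m+1+1 by omega,
    q_succ, pow_succ]
  push_cast
  field_simp
  ring

lemma b1R (n : ℕ) : c2 n * fR (n+1) 1 + c1 n * fR (n+1) 0 = gR (n+2) 0 - gR (n+1) 1 := by
  have h0 := q_ne n
  have h3 := q_ne (2*n)
  have h2n1 : 2*(n:ℚ) + 1 ≠ 0 := by positivity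
  have h1 := q_ne (n+1)
  have h2 := q_ne (2*n+1)
  have hn2 : (n:ℚ) + 2 ≠ 0 := by positivity
  have hn1 : (n:ℚ) + 1 ≠ 0 := by positivity
  simp only [fR, gR, c2, c1, c0]
  simp only [show 2*(n+1)+1-2 = 2*n+1 by omega, show 2*(n+2)+0-2 = 2*n+1+1 by omega]
  simp only [show 2*(n+1)+0 = 2*n+1+1 by omega, show 2*(n+1)+1 = 2*n+1+1+1 by omega,
    show 3*(n+2) = 3*(n+1)+1+1+1 by omega, show n+2 = n+1+1 by omega]
  simp only [q_succ, q_zero, q_one, pow_one, pow_zero]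
  push_cast
  field_simp
  ring

lemma b2R (n : ℕ) : c2 n * fR (n+2) 0 = - gR (n+2) 0 := by
  have h0 := q_ne n
  have h3 := q_ne (2*n)
  have h2n1 : 2*(n:ℚ) + 1 ≠ 0 := by positivity
  have h1 := q_ne (n+1)
  have h2 := q_ne (2*n+1)
  have hn2 : (n:ℚ) + 2 ≠ 0 := by positivity
  have hn1 : (n:ℚ) + 1 ≠ 0 := by positivity
  simp only [fR, gR, c2]
  simp only [show 2*(n+2)+0-2 = 2*n+1+1 by omega]
  simp only [show 2*(n+2)+0 = 2*n+1+1+1+1 by omega, show n+2 = n+1+1 by omega]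
  simp only [q_succ, q_zero, q_one, pow_one, pow_zero]
  push_cast
  field_simp
  ring

lemma g0R (n : ℕ) : gR 0 (n+2) = 0 := by
  simp [gR]

lemma S_eq : ∀ n, S fL n = S fR n := by
  have base0 : S fL 0 = S fR 0 := by
    simp [S, fL, fR, XX_zero, YY_zero, q_zero]
  have base1 : S fL 1 = S fR 1 := by
    simp only [S, Finset.sum_range_succ, Finset.sum_range_zero]
    norm_num [fL, fR, XX_zero, YY_zero, XX_succ, YY_succ, q_succ, q_zero, q, Nat.factorial]
  have recL := rec_of_cert fL gL g0L genL b1L b2L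
  have recR := rec_of_cert fR gR g0R genR b1R b2R
  have step : ∀ n, S fL n = S fR n → S fL (n+1) = S fR (n+1) → S fL (n+2) = S fR (n+2) := by
    intro n h0 h1
    have hc2 : c2 n ≠ 0 := by
      simp only [c2]
      positivity
    have hL := recL n
    have hR := recR n
    apply mul_left_cancel₀ hc2
    rw [h0, h1] at hL
    linarith
  intro n
  induction n using Nat.strong_induction_on with
  | _ n ih =>
    match n with
    | 0 => exact base0
    | 1 => exact base1
    | (n+2) => exact step n (ih n (by omega)) (ih (n+1) (by omega))

end Stmt2Aux

open Stmt2Aux in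
theorem stmt_2 (n : ℕ) :
    (-27 : ℚ) ^ n *
      ∑ k ∈ Finset.range (n + 1),
        ((ascPochhammer ℚ k).eval (1/3) * (ascPochhammer ℚ (n - k)).eval (2/3) /
          ((ascPochhammer ℚ k).eval 1 * (ascPochhammer ℚ (n - k)).eval 1)) ^ 2
    = ∑ k ∈ Finset.range (n + 1),
        (Nat.choose (3*k) k : ℚ) * (Nat.choose (2*k) k) ^ 2 *
          (Nat.choose (n + k) (n - k)) * (-27 : ℚ) ^ (n - k) := by
  have hL : (-27 : ℚ) ^ n *
      ∑ k ∈ Finset.range (n + 1),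
        ((ascPochhammer ℚ k).eval (1/3) * (ascPochhammer ℚ (n - k)).eval (2/3) /
          ((ascPochhammer ℚ k).eval 1 * (ascPochhammer ℚ (n - k)).eval 1)) ^ 2 = S fL n := by
    rw [Finset.mul_sum, S]
    apply Finset.sum_congr rfl
    intro k hk
    simp only [Finset.mem_range] at hk
    have hkn : k ≤ n := by omega
    rw [fL, show k + (n - k) = n by omega]
    simp [XX, YY, q, ascPochhammer_eval_one]
  have hR : ∑ k ∈ Finset.range (n + 1),
        (Nat.choose (3*k) k : ℚ) * (Nat.choose (2*k) k) ^ 2 *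
          (Nat.choose (n + k) (n - k)) * (-27 : ℚ) ^ (n - k) = S fR n := by
    rw [S]
    apply Finset.sum_congr rfl
    intro k hk
    simp only [Finset.mem_range] at hk
    have hkn : k ≤ n := by omega
    rw [fR]
    rw [Nat.cast_choose ℚ (show k ≤ 3*k by omega),
        Nat.cast_choose ℚ (show k ≤ 2*k by omega),
        Nat.cast_choose ℚ (show n - k ≤ n + k by omega),
        show 3*k - k = 2*k by omega, show 2*k - k = k by omega,
        show n + k - (n - k) = 2*k by omega, show n + k = 2*k + (n - k) by omega]
    have h1 := q_ne k
    have h2 := q_ne (n - k)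
    have h3 := q_ne (2*k)
    have h4 := q_ne (2*k + (n-k))
    simp only [q] at h1 h2 h3 h4 ⊢
    field_simp
  rw [hL, hR, S_eq]
end

section
/- Define a(n) = Σ_{k=0}^n C(4k,2k) * C(2k,k)^2 * C(n+k, n-k) * (-64)^{n-k}. Then for all n ≥ 0, (n+2)^3 * a(n+2) + 8(2n+3)(8n^2+24n+21) * a(n+1) + 4096 (n+1)^3 * a(n) = 0. -/
open Finset

def cc (k : ℕ) : ℚ := (Nat.choose (4*k) (2*k)) * (Nat.choose (2*k) k)^2

def FF (n k : ℕ) : ℚ := cc k * (Nat.choose (n+k) (2*k)) * (-64)^(n-k)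

def GG (n k : ℕ) : ℚ :=
  -4096 * (2*(n:ℚ)+3) * (k:ℚ)^3 / (2*(k:ℚ)-1) * cc k * (Nat.choose (n+k) (2*k-2))
    * (-64)^n / (-64)^k

lemma cc_eq (k : ℕ) : cc k = (Nat.centralBinom (2*k) : ℚ) * (Nat.centralBinom k : ℚ)^2 := by
  unfold cc Nat.centralBinom
  rw [show 2*(2*k) = 4*k by ring]

lemma cb_succ (m : ℕ) :
    ((m:ℚ)+1) * Nat.centralBinom (m+1) = 2*(2*m+1) * Nat.centralBinom m := by
  have h := Nat.succ_mul_centralBinom_succ m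
  have := congrArg (fun x : ℕ => (x : ℚ)) h
  push_cast at this
  linarith [this]

lemma cc_succ (k : ℕ) :
    cc (k+1) * ((k:ℚ)+1)^3 = cc k * (8*(4*(k:ℚ)+1)*(4*(k:ℚ)+3)*(2*(k:ℚ)+1)) := by
  have h1 := cb_succ (2*k+1)
  have h2 := cb_succ (2*k)
  have h3 := cb_succ k
  rw [cc_eq, cc_eq]
  rw [show 2*(k+1) = (2*k+1)+1 by ring]
  push_cast at h1 h2 h3 ⊢
  set A2 := (Nat.centralBinom (2*k+1+1) : ℚ)
  set A1 := (Nat.centralBinom (2*k+1) : ℚ)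
  set A0 := (Nat.centralBinom (2*k) : ℚ)
  set B1 := (Nat.centralBinom (k+1) : ℚ)
  set B0 := (Nat.centralBinom k : ℚ)
  have hk : (2*(k:ℚ)+1) ≠ 0 := by positivity
  have key : (2*(k:ℚ)+1) * 2 * (A2 * B1^2 * ((k:ℚ)+1)^3)
      = (2*(k:ℚ)+1) * 2 * (A0 * B0^2 * (8*(4*(k:ℚ)+1)*(4*(k:ℚ)+3)*(2*(k:ℚ)+1))) := by
    linear_combination ((2*(k:ℚ)+1) * ((k:ℚ)+1)^2 * B1^2) * h1
      + (2*(4*(k:ℚ)+3) * ((k:ℚ)+1)^2 * B1^2) * h2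
      + (4*(4*(k:ℚ)+3)*(4*(k:ℚ)+1)*A0*(((k:ℚ)+1)*B1 + 2*(2*(k:ℚ)+1)*B0)) * h3
  have h2' : (2*(k:ℚ)+1) * 2 ≠ 0 := by positivity
  exact mul_left_cancel₀ h2' key

lemma chooseA (m r : ℕ) (h : r ≤ m) :
    ((m+1).choose r : ℚ) * ((m:ℚ)+1-r) = ((m:ℚ)+1) * (m.choose r) := by
  have h1 := Nat.choose_succ_right_eq (m+1) r
  have h2 := Nat.add_one_mul_choose_eq m r
  have e : (m+1) - r = (m - r) + 1 := by omega
  rw [e] at h1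
  have c1 := congrArg (fun x : ℕ => (x : ℚ)) h1
  have c2 := congrArg (fun x : ℕ => (x : ℚ)) h2
  push_cast [Nat.cast_sub h] at c1 c2
  rw [show ((m:ℚ)+1-r) = ((m:ℚ)-r+1) by ring, ← c1, c2]

lemma chooseC (m s : ℕ) (h : s+2 ≤ m) :
    (m.choose (s+2) : ℚ) * ((s:ℚ)+2) * ((s:ℚ)+1)
      = (m.choose s : ℚ) * ((m:ℚ)-s-1) * ((m:ℚ)-s) := by
  have h1 := Nat.choose_succ_right_eq m (s+1)
  have h2 := Nat.choose_succ_right_eq m s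
  have e1 : m - (s+1) = (m - s - 1) := by omega
  rw [e1] at h1
  have c1 := congrArg (fun x : ℕ => (x : ℚ)) h1
  have c2 := congrArg (fun x : ℕ => (x : ℚ)) h2
  have hs1 : s + 1 ≤ m := by omega
  have hs : s ≤ m := by omega
  push_cast [Nat.cast_sub hs1, Nat.cast_sub hs] at c1 c2
  rw [Nat.cast_sub (by omega : 1 ≤ m - s), Nat.cast_sub hs] at c1
  push_cast at c1
  rw [show s+1+1 = s+2 from rfl] at c1
  linear_combination ((s:ℚ)+1)*c1 + ((m:ℚ)-s-1)*c2

lemma tele (n k : ℕ) :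
    ((n:ℚ)+2)^3 * FF (n+2) k
      + 8*(2*(n:ℚ)+3)*(8*(n:ℚ)^2+24*(n:ℚ)+21) * FF (n+1) k
      + 4096*((n:ℚ)+1)^3 * FF n k
    = GG n (k+1) - GG n k := by
  rcases Nat.lt_or_ge n k with hnk | hnk
  · -- k ≥ n+1
    rcases Nat.lt_or_ge (n+2) k with hk3 | hk3
    · -- k ≥ n+3 : everything vanishes
      have z1 : Nat.choose (n+2+k) (2*k) = 0 := Nat.choose_eq_zero_of_lt (by omega)
      have z2 : Nat.choose (n+1+k) (2*k) = 0 := Nat.choose_eq_zero_of_lt (by omega)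
      have z3 : Nat.choose (n+k) (2*k) = 0 := Nat.choose_eq_zero_of_lt (by omega)
      have z4 : Nat.choose (n+k) (2*k-2) = 0 := Nat.choose_eq_zero_of_lt (by omega)
      have z5 : Nat.choose (n+(k+1)) (2*(k+1)-2) = 0 := Nat.choose_eq_zero_of_lt (by omega)
      simp [FF, GG, z1, z2, z3, z4, z5]
    · rcases Nat.eq_or_lt_of_le hk3 with hk2 | hk2
      · -- k = n+2
        subst hk2
        have z2 : Nat.choose (n+1+(n+2)) (2*(n+2)) = 0 := Nat.choose_eq_zero_of_lt (by omega)
        have z3 : Nat.choose (n+(n+2)) (2*(n+2)) = 0 := Nat.choose_eq_zero_of_lt (by omega)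
        have z5 : Nat.choose (n+(n+2+1)) (2*(n+2+1)-2) = 0 := Nat.choose_eq_zero_of_lt (by omega)
        have e1 : Nat.choose (n+2+(n+2)) (2*(n+2)) = 1 := by
          rw [show n+2+(n+2) = 2*(n+2) by ring, Nat.choose_self]
        have e4 : Nat.choose (n+(n+2)) (2*(n+2)-2) = 1 := by
          rw [show 2*(n+2)-2 = n+(n+2) by omega, Nat.choose_self]
        have esub : n+2-(n+2) = 0 := by omega
        simp only [FF, GG, z2, z3, z5, e1, e4, esub]
        have hp : ((-64:ℚ))^(n+2) = (-64)^n * 4096 := by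
          rw [pow_add]; norm_num
        rw [hp]
        have h64 : ((-64:ℚ))^n ≠ 0 := by positivity
        have hd : (2*((n:ℚ)+2)-1) ≠ 0 := by
          rw [show (2*((n:ℚ)+2)-1) = 2*(n:ℚ)+3 by ring]; positivity
        push_cast
        field_simp
        ring
      · -- k = n+1
        obtain rfl : k = n+1 := by omega
        have z3 : Nat.choose (n+(n+1)) (2*(n+1)) = 0 := Nat.choose_eq_zero_of_lt (by omega)
        have e1 : Nat.choose (n+2+(n+1)) (2*(n+1)) = 2*n+3 := by
          rw [show n+2+(n+1) = (2*(n+1))+1 by ring]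
          rw [← Nat.choose_symm (by omega)]
          rw [show 2*(n+1)+1-2*(n+1) = 1 by omega, Nat.choose_one_right]
          omega
        have e2 : Nat.choose (n+1+(n+1)) (2*(n+1)) = 1 := by
          rw [show n+1+(n+1) = 2*(n+1) by ring, Nat.choose_self]
        have e4 : Nat.choose (n+(n+1)) (2*(n+1)-2) = 2*n+1 := by
          rw [show 2*(n+1)-2 = 2*n by omega]
          rw [show n+(n+1) = (2*n)+1 by ring]
          rw [← Nat.choose_symm (by omega)]
          rw [show 2*n+1-2*n = 1 by omega, Nat.choose_one_right]
        have e5 : Nat.choose (n+(n+1+1)) (2*(n+1+1)-2) = 1 := by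
          rw [show 2*(n+1+1)-2 = n+(n+1+1) by omega, Nat.choose_self]
        have es1 : n+2-(n+1) = 1 := by omega
        have es2 : n+1-(n+1) = 0 := by omega
        have h64 : ((-64:ℚ))^n ≠ 0 := by positivity
        have hp1 : ((-64:ℚ))^(n+1) = (-64)^n * (-64) := by rw [pow_succ]
        have hp2 : ((-64:ℚ))^(n+1+1) = (-64)^n * 4096 := by
          rw [pow_succ, pow_succ]; ring
        have hcs := cc_succ (n+1)
        push_cast at hcs
        have hd1 : (2*((n:ℚ)+1)-1) ≠ 0 := by
          rw [show (2*((n:ℚ)+1)-1) = 2*(n:ℚ)+1 by ring]; positivity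
        have hd2 : (2*((n:ℚ)+1+1)-1) ≠ 0 := by
          rw [show (2*((n:ℚ)+1+1)-1) = 2*(n:ℚ)+3 by ring]; positivity
        have hF2 : FF (n+2) (n+1) = cc (n+1) * (2*(n:ℚ)+3) * (-64) := by
          simp only [FF, e1, es1]
          push_cast; ring
        have hF1 : FF (n+1) (n+1) = cc (n+1) := by
          simp only [FF, e2, es2]
          push_cast; ring
        have hF0 : FF n (n+1) = 0 := by simp [FF, z3]
        have hG1 : GG n (n+1) = 64*(2*(n:ℚ)+3)*((n:ℚ)+1)^3 * cc (n+1) := by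
          simp only [GG, e4]
          rw [hp1]
          push_cast
          field_simp
          ring
        have hG2 : GG n (n+1+1) = -(8*(4*(n:ℚ)+5)*(4*(n:ℚ)+7)*(2*(n:ℚ)+3)) * cc (n+1) := by
          simp only [GG, e5]
          rw [hp2]
          push_cast
          rw [div_eq_iff (by positivity : ((-64:ℚ))^n * 4096 ≠ 0)]
          field_simp
          linear_combination -hcs
        rw [hF2, hF1, hF0, hG1, hG2]
        ring
  · -- k ≤ n
    rcases Nat.eq_zero_or_pos k with rfl | hk0
    · -- k = 0
      have hcc0 : cc 0 = 1 := by norm_num [cc]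
      have hcc1 : cc 1 = 24 := by
        unfold cc
        rw [show Nat.choose 4 2 = 6 from rfl, show Nat.choose 2 1 = 2 from rfl]
        norm_num
      simp only [FF, GG, hcc0, hcc1, Nat.sub_zero, Nat.mul_zero, Nat.choose_zero_right]
      norm_num
      have hp1 : ((-64:ℚ))^(n+1) = (-64)^n * (-64) := by rw [pow_succ]
      have hp2 : ((-64:ℚ))^(n+2) = (-64)^n * 4096 := by rw [pow_succ, pow_succ]; ring
      rw [hp1, hp2]
      ring
    · -- 1 ≤ k ≤ n
      obtain ⟨K, rfl⟩ : ∃ K, k = K+1 := ⟨k-1, by omega⟩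
      obtain ⟨j, rfl⟩ : ∃ j, n = K+1+j := ⟨n-(K+1), by omega⟩
      simp only [FF, GG]
      rw [show K+1+j+2+(K+1) = 2*K+j+2+1+1 by omega,
          show K+1+j+1+(K+1) = 2*K+j+2+1 by omega,
          show K+1+j+(K+1+1) = 2*K+j+2+1 by omega,
          show K+1+j+(K+1) = 2*K+j+2 by omega,
          show 2*(K+1) = 2*K+2 by omega,
          show 2*(K+1+1)-2 = 2*K+2 by omega,
          show 2*K+2-2 = 2*K by omega,
          show K+1+j+2-(K+1) = j+2 by omega,
          show K+1+j+1-(K+1) = j+1 by omega,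
          show K+1+j-(K+1) = j by omega,
          show K+1+j = (K+1)+j by omega]
      rw [pow_add ((-64:ℚ)) (K+1) j, pow_succ ((-64:ℚ)) (K+1)]
      have hj1 : ((j:ℚ)+1) ≠ 0 := by positivity
      have hj2 : ((j:ℚ)+2) ≠ 0 := by positivity
      have hq2 : (((K:ℚ)+1)+1) ≠ 0 := by positivity
      have hdk1 : (2*((K:ℚ)+1)-1) ≠ 0 := by
        rw [show (2*((K:ℚ)+1)-1) = 2*(K:ℚ)+1 by ring]; positivity
      have hdk2 : (2*((K:ℚ)+1+1)-1) ≠ 0 := by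
        rw [show (2*((K:ℚ)+1+1)-1) = 2*(K:ℚ)+3 by ring]; positivity
      have h64 : ((-64:ℚ))^(K+1) ≠ 0 := by positivity
      have hA1 := chooseA (2*K+j+2) (2*K+2) (by omega)
      have hA2 := chooseA (2*K+j+2+1) (2*K+2) (by omega)
      have hWc := chooseC (2*K+j+2) (2*K) (by omega)
      have hc := cc_succ (K+1)
      push_cast at hA1 hA2 hWc hc
      have hYe : ((Nat.choose (2*K+j+2+1) (2*K+2) : ℚ))
          = (Nat.choose (2*K+j+2) (2*K+2) : ℚ) * (2*(K:ℚ)+(j:ℚ)+3)/((j:ℚ)+1) := by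
        rw [eq_div_iff hj1]; linear_combination hA1
      have hZe : ((Nat.choose (2*K+j+2+1+1) (2*K+2) : ℚ))
          = (Nat.choose (2*K+j+2+1) (2*K+2) : ℚ) * (2*(K:ℚ)+(j:ℚ)+4)/((j:ℚ)+2) := by
        rw [eq_div_iff hj2]; linear_combination hA2
      have hWe : ((Nat.choose (2*K+j+2) (2*K) : ℚ))
          = (Nat.choose (2*K+j+2) (2*K+2) : ℚ) * ((2*(K:ℚ)+2)*(2*(K:ℚ)+1))
            / (((j:ℚ)+1)*((j:ℚ)+2)) := by
        rw [eq_div_iff (by positivity : ((j:ℚ)+1)*((j:ℚ)+2) ≠ 0)]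
        linear_combination -hWc
      have hce : cc (K+1+1)
          = cc (K+1) * (8*(4*((K:ℚ)+1)+1)*(4*((K:ℚ)+1)+3)*(2*((K:ℚ)+1)+1))
            / (((K:ℚ)+1)+1)^3 := by
        rw [eq_div_iff (by positivity : (((K:ℚ)+1)+1)^3 ≠ 0)]
        linear_combination hc
      rw [hZe, hYe, hWe, hce]
      push_cast
      have hdk0 : (2*(K:ℚ)+1) ≠ 0 := by positivity
      have hdk3 : (2*(K:ℚ)+3) ≠ 0 := by positivity
      simp only [show (2*((K:ℚ)+1)-1) = 2*(K:ℚ)+1 by ring,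
        show (2*((K:ℚ)+1+1)-1) = 2*(K:ℚ)+3 by ring]
      field_simp
      ring

theorem stmt_3 (a : ℕ → ℤ)
    (ha : ∀ n : ℕ, a n = ∑ k ∈ Finset.range (n + 1),
      (Nat.choose (4*k) (2*k) : ℤ) * (Nat.choose (2*k) k) ^ 2 *
        (Nat.choose (n + k) (n - k)) * (-64 : ℤ) ^ (n - k)) :
    ∀ n : ℕ,
      ((n : ℤ) + 2) ^ 3 * a (n + 2) +
        8 * (2 * (n : ℤ) + 3) * (8 * (n : ℤ) ^ 2 + 24 * n + 21) * a (n + 1) +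
        4096 * ((n : ℤ) + 1) ^ 3 * a n = 0 := by
  intro n
  have haF : ∀ m : ℕ, ((a m : ℤ) : ℚ) = ∑ k ∈ Finset.range (m+1), FF m k := by
    intro m
    rw [ha m]
    push_cast
    refine Finset.sum_congr rfl ?_
    intro k hk
    have hk' : k ≤ m := Nat.lt_succ_iff.mp (Finset.mem_range.mp hk)
    unfold FF cc
    have hsy : (m+k).choose (m-k) = (m+k).choose (2*k) := by
      rw [show m - k = (m+k) - (2*k) by omega]
      exact Nat.choose_symm (by omega)
    rw [hsy]
  have hFzero : ∀ m k : ℕ, m < k → FF m k = 0 := by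
    intro m k h
    unfold FF
    rw [Nat.choose_eq_zero_of_lt (by omega)]
    simp
  have ha' : ∀ m N : ℕ, m < N → ((a m : ℤ) : ℚ) = ∑ k ∈ Finset.range N, FF m k := by
    intro m N h
    rw [haF m]
    refine Finset.sum_subset ?_ ?_
    · intro x hx
      simp only [Finset.mem_range] at hx ⊢
      omega
    · intro x hx hx2
      simp only [Finset.mem_range] at hx hx2
      exact hFzero m x (by omega)
  have key : ((n:ℚ)+2)^3 * ((a (n+2) : ℤ) : ℚ)
      + 8*(2*(n:ℚ)+3)*(8*(n:ℚ)^2+24*(n:ℚ)+21) * ((a (n+1) : ℤ) : ℚ)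
      + 4096*((n:ℚ)+1)^3 * ((a n : ℤ) : ℚ) = 0 := by
    rw [ha' n (n+3) (by omega), ha' (n+1) (n+3) (by omega), ha' (n+2) (n+3) (by omega)]
    rw [Finset.mul_sum, Finset.mul_sum, Finset.mul_sum,
      ← Finset.sum_add_distrib, ← Finset.sum_add_distrib]
    rw [Finset.sum_congr rfl (fun k _ => tele n k)]
    rw [Finset.sum_range_sub (fun k => GG n k)]
    have g0 : GG n 0 = 0 := by norm_num [GG]
    have g3 : GG n (n+3) = 0 := by
      unfold GG
      rw [Nat.choose_eq_zero_of_lt (by omega)]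
      simp
    rw [g0, g3]
    ring
  exact_mod_cast key
end

section
/- Define b(n) = (-27)^n * Σ_{k=0}^n ((1/3)_k (2/3)_{n-k} / (k!·(n-k)!))^2. Then for all n ≥ 0, (n+2)^3 * b(n+2) + 3(2n+3)(9n^2+27n+23) * b(n+1) + 729 (n+1)^3 * b(n) = 0. -/
open Finset

noncomputable def uu4 (k : ℕ) : ℚ := ((ascPochhammer ℚ k).eval (1/3) / k.factorial) ^ 2
noncomputable def vv4 (m : ℕ) : ℚ := ((ascPochhammer ℚ m).eval (2/3) / m.factorial) ^ 2

lemma uu4_succ (k : ℕ) : uu4 (k+1) = (3*(k:ℚ)+1)^2 / (9*((k:ℚ)+1)^2) * uu4 k := by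
  have hf : (k.factorial : ℚ) ≠ 0 := Nat.cast_ne_zero.mpr k.factorial_ne_zero
  have hk : ((k:ℚ)+1) ≠ 0 := by positivity
  unfold uu4
  rw [ascPochhammer_succ_right, Nat.factorial_succ]
  push_cast
  simp only [Polynomial.eval_mul, Polynomial.eval_add, Polynomial.eval_X, Polynomial.eval_natCast]
  field_simp
  ring

lemma vv4_succ (m : ℕ) : vv4 (m+1) = (3*(m:ℚ)+2)^2 / (9*((m:ℚ)+1)^2) * vv4 m := by
  have hf : (m.factorial : ℚ) ≠ 0 := Nat.cast_ne_zero.mpr m.factorial_ne_zero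
  have hm : ((m:ℚ)+1) ≠ 0 := by positivity
  unfold vv4
  rw [ascPochhammer_succ_right, Nat.factorial_succ]
  push_cast
  simp only [Polynomial.eval_mul, Polynomial.eval_add, Polynomial.eval_X, Polynomial.eval_natCast]
  field_simp
  ring

lemma vv4_back (m : ℕ) : vv4 m = 9*((m:ℚ)+1)^2 / (3*(m:ℚ)+2)^2 * vv4 (m+1) := by
  have h1 : ((m:ℚ)+1) ≠ 0 := by positivity
  have h2 : (3*(m:ℚ)+2) ≠ 0 := by positivity
  rw [vv4_succ]
  field_simp

noncomputable def RR4 (n k : ℕ) : ℚ :=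
  9*(k:ℚ)^2*(3*((n:ℚ)+1)*((n:ℚ)+2) + 2*(k:ℚ) - 3*(k:ℚ)^2) / (3*(n:ℚ)+5-3*(k:ℚ))^2

noncomputable def GG4 (n k : ℕ) : ℚ :=
  if k ≤ n+2 then RR4 n k * uu4 k * vv4 (n+2-k) else 0

lemma point4 (n k : ℕ) (hk : k ≤ n + 2) :
    9*((n:ℚ)+2)^3 * (uu4 k * vv4 (n+2-k))
      - (2*(n:ℚ)+3)*(9*(n:ℚ)^2+27*(n:ℚ)+23) * (if k ≤ n+1 then uu4 k * vv4 (n+1-k) else 0)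
      + 9*((n:ℚ)+1)^3 * (if k ≤ n then uu4 k * vv4 (n-k) else 0)
      = GG4 n (k+1) - GG4 n k := by
  by_cases hk0 : k ≤ n
  · obtain ⟨m, rfl⟩ : ∃ m, n = k + m := ⟨n - k, by omega⟩
    rw [if_pos (by omega : k ≤ k+m+1), if_pos hk0]
    unfold GG4 RR4
    rw [if_pos (by omega : k+1 ≤ k+m+2), if_pos (by omega : k ≤ k+m+2)]
    rw [show k+m+2-k = m+2 from by omega, show k+m+1-k = m+1 from by omega,
        show k+m-k = m from by omega, show k+m+2-(k+1) = m+1 from by omega]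
    rw [uu4_succ k, vv4_back m, vv4_back (m+1)]
    rw [show m+1+1 = m+2 from by omega]
    push_cast
    have h1 : ((k:ℚ)+1) ≠ 0 := by positivity
    have h2 : (3*(m:ℚ)+2) ≠ 0 := by positivity
    have h3 : (3*((m:ℚ)+1)+2) ≠ 0 := by positivity
    have h4 : (3*((k:ℚ)+(m:ℚ))+5-3*(k:ℚ)) ≠ 0 := by
      have : (3*((k:ℚ)+(m:ℚ))+5-3*(k:ℚ)) = 3*(m:ℚ)+5 := by ring
      rw [this]; positivity
    have h5 : (3*((k:ℚ)+(m:ℚ))+5-3*((k:ℚ)+1)) ≠ 0 := by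
      have : (3*((k:ℚ)+(m:ℚ))+5-3*((k:ℚ)+1)) = 3*(m:ℚ)+2 := by ring
      rw [this]; positivity
    have h6 : (3*(m:ℚ)+5) ≠ 0 := by positivity
    rw [show (3*((k:ℚ)+(m:ℚ))+5-3*((k:ℚ)+1)) = 3*(m:ℚ)+2 by ring,
      show (3*((k:ℚ)+(m:ℚ))+5-3*(k:ℚ)) = 3*(m:ℚ)+5 by ring]
    field_simp
    ring
  · by_cases hk1 : k ≤ n+1
    · have hkn : k = n+1 := by omega
      subst hkn
      rw [if_pos (le_refl (n+1)), if_neg hk0]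
      unfold GG4 RR4
      rw [if_pos (by omega : n+1+1 ≤ n+2), if_pos (by omega : n+1 ≤ n+2)]
      rw [show n+2-(n+1+1) = 0 from by omega, show n+2-(n+1) = 1 from by omega,
          show n+1-(n+1) = 0 from by omega]
      rw [uu4_succ (n+1), vv4_back 0]
      push_cast
      have ha : (3*(n:ℚ)+5-3*((n:ℚ)+1+1)) ≠ 0 := by
        have : (3*(n:ℚ)+5-3*((n:ℚ)+1+1)) = -1 := by ring
        rw [this]; norm_num
      have hb2 : (3*(n:ℚ)+5-3*((n:ℚ)+1)) ≠ 0 := by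
        have : (3*(n:ℚ)+5-3*((n:ℚ)+1)) = 2 := by ring
        rw [this]; norm_num
      have hc : ((n:ℚ)+1+1) ≠ 0 := by positivity
      field_simp
      ring
    · have hkn : k = n+2 := by omega
      subst hkn
      rw [if_neg hk1, if_neg hk0]
      unfold GG4 RR4
      rw [if_neg (by omega : ¬ n+2+1 ≤ n+2), if_pos (le_refl (n+2))]
      rw [show n+2-(n+2) = 0 from by omega]
      push_cast
      have h4 : (3*(n:ℚ)+5-3*((n:ℚ)+2)) ≠ 0 := by
        have : (3*(n:ℚ)+5-3*((n:ℚ)+2)) = -1 := by ring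
        rw [this]; norm_num
      field_simp
      ring

lemma key4 (n : ℕ) :
    9*((n:ℚ)+2)^3 * (∑ k ∈ Finset.range (n+3), uu4 k * vv4 (n+2-k))
      - (2*(n:ℚ)+3)*(9*(n:ℚ)^2+27*(n:ℚ)+23) * (∑ k ∈ Finset.range (n+2), uu4 k * vv4 (n+1-k))
      + 9*((n:ℚ)+1)^3 * (∑ k ∈ Finset.range (n+1), uu4 k * vv4 (n-k)) = 0 := by
  have h1 : (∑ k ∈ Finset.range (n+2), uu4 k * vv4 (n+1-k))
      = ∑ k ∈ Finset.range (n+3), (if k ≤ n+1 then uu4 k * vv4 (n+1-k) else 0) := by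
    rw [Finset.sum_range_succ (n := n+2), if_neg (by omega), add_zero]
    exact Finset.sum_congr rfl fun k hk =>
      (if_pos (by simp only [Finset.mem_range] at hk; omega)).symm
  have h0 : (∑ k ∈ Finset.range (n+1), uu4 k * vv4 (n-k))
      = ∑ k ∈ Finset.range (n+3), (if k ≤ n then uu4 k * vv4 (n-k) else 0) := by
    rw [Finset.sum_range_succ (n := n+2), Finset.sum_range_succ (n := n+1),
        if_neg (by omega), if_neg (by omega), add_zero, add_zero]
    exact Finset.sum_congr rfl fun k hk =>
      (if_pos (by simp only [Finset.mem_range] at hk; omega)).symm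
  have tel : ∑ k ∈ Finset.range (n+3), (GG4 n (k+1) - GG4 n k) = 0 := by
    rw [Finset.sum_range_sub (f := GG4 n)]
    simp [GG4, RR4]
  calc 9*((n:ℚ)+2)^3 * (∑ k ∈ Finset.range (n+3), uu4 k * vv4 (n+2-k))
      - (2*(n:ℚ)+3)*(9*(n:ℚ)^2+27*(n:ℚ)+23) * (∑ k ∈ Finset.range (n+2), uu4 k * vv4 (n+1-k))
      + 9*((n:ℚ)+1)^3 * (∑ k ∈ Finset.range (n+1), uu4 k * vv4 (n-k))
      = ∑ k ∈ Finset.range (n+3), (GG4 n (k+1) - GG4 n k) := by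
        rw [h1, h0, Finset.mul_sum, Finset.mul_sum, Finset.mul_sum,
          ← Finset.sum_sub_distrib, ← Finset.sum_add_distrib]
        exact Finset.sum_congr rfl fun k hk =>
          point4 n k (by simp only [Finset.mem_range] at hk; omega)
    _ = 0 := tel

theorem stmt_4 (b : ℕ → ℚ)
    (hb : ∀ n : ℕ, b n = (-27 : ℚ) ^ n *
      ∑ k ∈ Finset.range (n + 1),
        ((ascPochhammer ℚ k).eval (1/3) * (ascPochhammer ℚ (n - k)).eval (2/3) /
          ((k.factorial : ℚ) * ((n - k).factorial : ℚ))) ^ 2) :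
    ∀ n : ℕ,
      ((n : ℚ) + 2) ^ 3 * b (n + 2) +
        3 * (2 * (n : ℚ) + 3) * (9 * (n : ℚ) ^ 2 + 27 * n + 23) * b (n + 1) +
        729 * ((n : ℚ) + 1) ^ 3 * b n = 0 := by
  have hbS : ∀ N : ℕ, b N = (-27:ℚ)^N * ∑ k ∈ Finset.range (N+1), uu4 k * vv4 (N-k) := by
    intro N
    rw [hb N]
    congr 1
    refine Finset.sum_congr rfl fun k _ => ?_
    unfold uu4 vv4
    rw [← div_mul_div_comm, mul_pow]
  intro n
  rw [hbS, hbS, hbS]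
  simp only [show n+2+1 = n+3 from by omega, show n+1+1 = n+2 from by omega]
  linear_combination (81*(-27:ℚ)^n) * key4 n
end
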